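/- arXiv:2605.08899 — 7 statements merged into one kernel-verified Lean document; each statement's English description precedes it below -/
import Mathlib

section
/- Let G₁, G₂ : ℝ → ℝ be continuous monotone non-decreasing functions with values in [0,1] satisfying Gᵢ(x) = 1 - Gᵢ(-x) for all x ∈ ℝ (i = 1,2), and let a > 0. Then ∫_{-a}^{a} ∫_{-1/a}^{1/a} G₁(x)G₂(y)/(1 + x²y²) dy dx = G, where G = ∑_{n=0}^∞ (-1)^n/(2n+1)² is Catalan's constant. -/
open Real intervalIntegral MeasureTheory Finset Filter

lemma arctan_le_self' {u : ℝ} (hu : 0 ≤ u) : Real.arctan u ≤ u := by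
  have h := integral_one_div_one_add_sq (a := 0) (b := u)
  rw [Real.arctan_zero, sub_zero] at h
  rw [← h]
  calc ∫ x in (0:ℝ)..u, 1 / (1 + x ^ 2)
      ≤ ∫ x in (0:ℝ)..u, (1:ℝ) := by
        apply intervalIntegral.integral_mono_on hu
        · apply Continuous.intervalIntegrable
          apply continuous_const.div (by continuity)
          intro x; positivity
        · exact intervalIntegrable_const
        · intro x _
          rw [div_le_one (by positivity)]
          nlinarith [sq_nonneg x]
    _ = u := by simp

lemma abs_arctan_le (u : ℝ) : |Real.arctan u| ≤ |u| := by
  have h0 : ∀ v : ℝ, 0 ≤ v → 0 ≤ Real.arctan v := by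
    intro v hv
    simpa using Real.arctan_strictMono.monotone hv
  rcases le_or_gt 0 u with h | h
  · rw [abs_of_nonneg (h0 u h), abs_of_nonneg h]
    exact arctan_le_self' h
  · have : Real.arctan u = -Real.arctan (-u) := by
      rw [Real.arctan_neg, neg_neg]
    rw [this, abs_neg, abs_of_nonneg (h0 _ (by linarith)), abs_of_neg h]
    exact arctan_le_self' (by linarith)

lemma abs_arctan_div_le_one (t : ℝ) : |Real.arctan t / t| ≤ 1 := by
  rcases eq_or_ne t 0 with rfl | ht
  · simp
  · rw [abs_div, div_le_one (abs_pos.mpr ht)]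
    exact abs_arctan_le t

lemma geom_decomp (N : ℕ) (u : ℝ) :
    (1:ℝ) / (1 + u^2) =
      (∑ n ∈ Finset.range N, (-1:ℝ)^n * u^(2*n)) + (-1:ℝ)^N * u^(2*N) / (1 + u^2) := by
  have h : (1:ℝ) + u^2 ≠ 0 := by positivity
  induction N with
  | zero => simp
  | succ N ih =>
    rw [Finset.sum_range_succ]
    rw [ih]
    field_simp
    ring

lemma arctan_sum (N : ℕ) (t : ℝ) :
    Real.arctan t = (∑ n ∈ Finset.range N, (-1:ℝ)^n * t^(2*n+1) / (2*n+1))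
      + (-1:ℝ)^N * ∫ u in (0:ℝ)..t, u^(2*N) / (1 + u^2) := by
  have h := integral_one_div_one_add_sq (a := 0) (b := t)
  rw [Real.arctan_zero, sub_zero] at h
  have hcont : Continuous fun u : ℝ => u^(2*N) / (1 + u^2) := by
    apply Continuous.div (by continuity) (by continuity)
    intro x; positivity
  rw [← h]
  have : ∀ u : ℝ, (1:ℝ) / (1 + u^2) =
      (∑ n ∈ Finset.range N, (-1:ℝ)^n * u^(2*n)) + (-1:ℝ)^N * (u^(2*N) / (1 + u^2)) := by
    intro u
    rw [geom_decomp N u]; ring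
  rw [intervalIntegral.integral_congr (g := fun u =>
      (∑ n ∈ Finset.range N, (-1:ℝ)^n * u^(2*n)) + (-1:ℝ)^N * (u^(2*N) / (1 + u^2)))
      (fun u _ => this u)]
  rw [intervalIntegral.integral_add (by apply Continuous.intervalIntegrable; continuity)
      ((hcont.intervalIntegrable 0 t).const_mul _)]
  rw [intervalIntegral.integral_const_mul,
      intervalIntegral.integral_finset_sum (fun i _ => by
        apply Continuous.intervalIntegrable; continuity)]
  congr 1
  apply Finset.sum_congr rfl
  intro n _
  rw [intervalIntegral.integral_const_mul, integral_pow]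
  push_cast
  ring

lemma remainder_bound (N : ℕ) {t : ℝ} (h0 : 0 ≤ t) :
    |∫ u in (0:ℝ)..t, u^(2*N) / (1 + u^2)| ≤ t^(2*N+1) / (2*N+1) := by
  have hcont : Continuous fun u : ℝ => u^(2*N) / (1 + u^2) := by
    apply Continuous.div (by continuity) (by continuity)
    intro x; positivity
  have hnn : 0 ≤ ∫ u in (0:ℝ)..t, u^(2*N) / (1 + u^2) := by
    apply intervalIntegral.integral_nonneg h0
    intro u hu
    have h1 : (0:ℝ) ≤ u := hu.1
    positivity
  rw [abs_of_nonneg hnn]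
  calc (∫ u in (0:ℝ)..t, u^(2*N) / (1 + u^2))
      ≤ ∫ u in (0:ℝ)..t, u^(2*N) := by
        apply intervalIntegral.integral_mono_on h0 (hcont.intervalIntegrable 0 t)
          (Continuous.intervalIntegrable (by continuity) 0 t)
        intro u hu
        rw [div_le_iff₀ (by positivity)]
        nlinarith [pow_nonneg hu.1 (2*N), sq_nonneg u]
    _ = t^(2*N+1) / (2*N+1) := by rw [integral_pow]; push_cast; simp

lemma partial_bound (N : ℕ) :
    |(∫ t in (0:ℝ)..1, Real.arctan t / t) - ∑ n ∈ Finset.range N, (-1:ℝ)^n/(2*n+1)^2|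
      ≤ 1/(2*N+1) := by
  set P : ℝ → ℝ := fun t => ∑ n ∈ Finset.range N, (-1:ℝ)^n * t^(2*n)/(2*n+1) with hP
  have hPc : Continuous P := by
    apply continuous_finset_sum
    intro i _
    continuity
  have hIP : ∫ t in (0:ℝ)..1, P t = ∑ n ∈ Finset.range N, (-1:ℝ)^n/(2*n+1)^2 := by
    rw [hP]
    rw [intervalIntegral.integral_finset_sum (fun i _ => by
      apply Continuous.intervalIntegrable; continuity)]
    apply Finset.sum_congr rfl
    intro n _
    have : (fun t : ℝ => (-1:ℝ)^n * t^(2*n)/(2*n+1)) =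
        fun t : ℝ => ((-1:ℝ)^n/(2*n+1)) * t^(2*n) := by
      funext t; ring
    rw [this, intervalIntegral.integral_const_mul, integral_pow]
    push_cast
    have h1 : ((2:ℝ)*n+1) ≠ 0 := by positivity
    field_simp
    ring
  have hIf : IntervalIntegrable (fun t => Real.arctan t / t) volume 0 1 := by
    apply IntervalIntegrable.mono_fun' (g := fun _ => (1:ℝ)) intervalIntegrable_const
    · exact (Real.measurable_arctan.div measurable_id).aestronglyMeasurable
    · exact Filter.Eventually.of_forall fun t => by
        simpa [Real.norm_eq_abs, abs_div] using abs_arctan_div_le_one t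
  rw [← hIP, ← intervalIntegral.integral_sub hIf (hPc.intervalIntegrable 0 1)]
  have := intervalIntegral.norm_integral_le_of_norm_le_const
    (a := 0) (b := 1) (C := 1/(2*N+1)) (f := fun t => Real.arctan t / t - P t) ?_
  · simpa [Real.norm_eq_abs] using this
  · intro t ht
    rw [Set.uIoc_of_le (by norm_num)] at ht
    obtain ⟨ht0, ht1⟩ := ht
    have htne : t ≠ 0 := ne_of_gt ht0
    have htP : t * P t = ∑ n ∈ Finset.range N, (-1:ℝ)^n * t^(2*n+1) / (2*n+1) := by
      rw [hP, Finset.mul_sum]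
      apply Finset.sum_congr rfl
      intro n _
      ring
    have key : Real.arctan t / t - P t =
        ((-1:ℝ)^N * ∫ u in (0:ℝ)..t, u^(2*N) / (1 + u^2)) / t := by
      rw [eq_div_iff htne, sub_mul, div_mul_cancel₀ _ htne]
      have := arctan_sum N t
      rw [this, mul_comm (P t) t, htP]
      ring
    simp only [Real.norm_eq_abs]
    rw [key, abs_div, abs_mul, abs_pow, abs_neg, abs_one, one_pow, one_mul,
        abs_of_pos ht0]
    rw [div_le_div_iff₀ ht0 (by positivity)]
    calc |∫ u in (0:ℝ)..t, u^(2*N) / (1 + u^2)| * (2*N+1)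
        ≤ (t^(2*N+1) / (2*N+1)) * (2*N+1) := by
          apply mul_le_mul_of_nonneg_right (remainder_bound N ht0.le) (by positivity)
      _ = t^(2*N+1) := by field_simp
      _ ≤ 1 * t := by
          rw [pow_succ]
          exact mul_le_mul_of_nonneg_right (pow_le_one₀ ht0.le ht1) ht0.le

lemma integral_arctan_div_eq_tsum :
    ∫ t in (0:ℝ)..1, Real.arctan t / t = ∑' n : ℕ, (-1:ℝ)^n / (2*n+1)^2 := by
  have hsum : Summable (fun n : ℕ => (-1:ℝ)^n / (2*n+1)^2) := by
    apply Summable.of_norm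
    have h2 : Summable (fun n : ℕ => 1 / ((n:ℝ)+1)^2) := by
      have h := (summable_nat_add_iff 1).mpr
        (summable_one_div_nat_pow (p := 2).mpr (by norm_num))
      apply h.congr
      intro n
      push_cast
      ring
    apply Summable.of_nonneg_of_le (fun n => norm_nonneg _) _ h2
    intro n
    rw [norm_div, norm_pow, norm_neg, norm_one, one_pow, Real.norm_eq_abs]
    rw [abs_of_pos (by positivity)]
    apply one_div_le_one_div_of_le (by positivity)
    have : ((n:ℝ)+1) ≤ 2*n+1 := by push_cast; linarith [Nat.cast_nonneg (α := ℝ) n]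
    nlinarith [Nat.cast_nonneg (α := ℝ) n]
  have h1 : Tendsto (fun N => ∑ n ∈ Finset.range N, (-1:ℝ)^n/(2*n+1)^2) atTop
      (nhds (∑' n : ℕ, (-1:ℝ)^n / (2*n+1)^2)) := hsum.hasSum.tendsto_sum_nat
  have h2 : Tendsto (fun N => ∑ n ∈ Finset.range N, (-1:ℝ)^n/(2*n+1)^2) atTop
      (nhds (∫ t in (0:ℝ)..1, Real.arctan t / t)) := by
    rw [tendsto_iff_dist_tendsto_zero]
    apply squeeze_zero (fun n => dist_nonneg)
      (g := fun N : ℕ => 1/((N:ℝ)+1))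
    · intro N
      rw [Real.dist_eq, abs_sub_comm]
      refine (partial_bound N).trans ?_
      apply one_div_le_one_div_of_le (by positivity)
      push_cast; linarith [Nat.cast_nonneg (α := ℝ) N]
    · exact tendsto_one_div_add_atTop_nhds_zero_nat
  exact tendsto_nhds_unique h2 h1

lemma key_sym {b : ℝ} {G f : ℝ → ℝ}
    (hGf : IntervalIntegrable (fun y => G y * f y) volume (-b) b)
    (hf : IntervalIntegrable f volume (-b) b) (heven : ∀ y, f (-y) = f y)
    (hG : ∀ y, G y = 1 - G (-y)) :
    ∫ y in (-b)..b, G y * f y = (1/2) * ∫ y in (-b)..b, f y := by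
  have h1 : ∫ y in (-b)..b, G (-y) * f (-y) = ∫ y in (-b)..b, G y * f y := by
    simpa using intervalIntegral.integral_comp_neg (a := -b) (b := b) (fun y => G y * f y)
  have h2 : (∫ y in (-b)..b, G (-y) * f (-y)) = ∫ y in (-b)..b, (f y - G y * f y) := by
    apply intervalIntegral.integral_congr
    intro y _
    have hGy : G (-y) = 1 - G y := by rw [hG y]; ring
    simp only []
    rw [hGy, heven y]; ring
  rw [intervalIntegral.integral_sub hf hGf] at h2
  rw [h2] at h1
  linarith

theorem catalan_double_integral (G₁ G₂ : ℝ → ℝ)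
    (hc₁ : Continuous G₁) (hc₂ : Continuous G₂)
    (hm₁ : Monotone G₁) (hm₂ : Monotone G₂)
    (hr₁ : ∀ x, G₁ x ∈ Set.Icc (0:ℝ) 1) (hr₂ : ∀ x, G₂ x ∈ Set.Icc (0:ℝ) 1)
    (hs₁ : ∀ x, G₁ x = 1 - G₁ (-x)) (hs₂ : ∀ x, G₂ x = 1 - G₂ (-x))
    (a : ℝ) (ha : 0 < a) :
    ∫ x in (-a)..a, ∫ y in (-(1/a))..(1/a), G₁ x * G₂ y / (1 + x^2 * y^2)
      = ∑' n : ℕ, (-1 : ℝ)^n / (2 * n + 1)^2 := by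
  have ha' : a ≠ 0 := ne_of_gt ha
  set b : ℝ := 1/a with hbdef
  have hb : 0 < b := by positivity
  set E : ℝ → ℝ := fun x => x⁻¹ * (2 * Real.arctan (x * b)) with hEdef
  -- boundedness of E
  have hEbound : ∀ x : ℝ, |E x| ≤ 2 * b := by
    intro x
    rcases eq_or_ne x 0 with rfl | hx
    · simp [hEdef]; positivity
    · rw [hEdef]
      simp only []
      rw [abs_mul, abs_mul, abs_inv]
      have h1 : |Real.arctan (x*b)| ≤ |x| * b := by
        calc |Real.arctan (x*b)| ≤ |x*b| := abs_arctan_le _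
          _ = |x| * b := by rw [abs_mul, abs_of_pos hb]
      calc |x|⁻¹ * (|2| * |Real.arctan (x*b)|) ≤ |x|⁻¹ * (2 * (|x| * b)) := by
            apply mul_le_mul_of_nonneg_left _ (by positivity)
            rw [abs_two]
            apply mul_le_mul_of_nonneg_left h1 (by norm_num)
        _ = 2 * b := by
            field_simp
  have hEmeas : Measurable E := by
    apply measurable_inv.mul
    apply Measurable.const_mul
    exact Real.measurable_arctan.comp (measurable_id.mul_const b)
  have hEeven : ∀ x : ℝ, E (-x) = E x := by
    intro x
    rw [hEdef]
    simp only [neg_mul, Real.arctan_neg, inv_neg]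
    ring
  have hEint : ∀ c d : ℝ, IntervalIntegrable E volume c d := by
    intro c d
    apply IntervalIntegrable.mono_fun' (g := fun _ => 2*b) intervalIntegrable_const
      hEmeas.aestronglyMeasurable.restrict
    exact Filter.Eventually.of_forall fun x => hEbound x
  -- Step 1 & 2: inner integral
  have hinner : ∀ x : ℝ, x ≠ 0 →
      (∫ y in (-b)..b, G₁ x * G₂ y / (1 + x^2 * y^2)) = G₁ x * ((1/2) * E x) := by
    intro x hx
    have hden : ∀ y : ℝ, (0:ℝ) < 1 + x^2*y^2 := fun y => by positivity
    have hfc : Continuous fun y : ℝ => (1:ℝ)/(1 + x^2*y^2) := by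
      apply continuous_const.div (by fun_prop)
      intro y; exact (hden y).ne'
    have e1 : (∫ y in (-b)..b, G₁ x * G₂ y / (1 + x^2 * y^2))
        = G₁ x * ∫ y in (-b)..b, G₂ y * (1/(1 + x^2*y^2)) := by
      rw [← intervalIntegral.integral_const_mul]
      apply intervalIntegral.integral_congr
      intro y _
      simp only []
      ring
    rw [e1]
    have e2 : (∫ y in (-b)..b, G₂ y * (1/(1 + x^2*y^2)))
        = (1/2) * ∫ y in (-b)..b, 1/(1 + x^2*y^2) := by
      apply key_sym ((hc₂.mul hfc).intervalIntegrable _ _) (hfc.intervalIntegrable _ _)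
      · intro y; simp [neg_pow]
      · exact hs₂
    rw [e2]
    have e3 : (∫ y in (-b)..b, 1/(1 + x^2*y^2)) = E x := by
      have e4 : (∫ y in (-b)..b, 1/(1 + x^2*y^2))
          = ∫ y in (-b)..b, (fun u => 1/(1+u^2)) (x * y) := by
        apply intervalIntegral.integral_congr
        intro y _
        simp only []
        ring_nf
      rw [e4, intervalIntegral.integral_comp_mul_left (fun u => 1/(1+u^2)) hx,
        integral_one_div_one_add_sq]
      rw [hEdef]
      simp only [mul_neg, Real.arctan_neg, smul_eq_mul]
      ring
    rw [e3]
  have h0 : ∀ᵐ x : ℝ, x ≠ 0 := by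
    rw [ae_iff]
    have : {x : ℝ | ¬ x ≠ 0} = {0} := by ext x; simp
    rw [this]
    exact measure_singleton 0
  have hstep3 : (∫ x in (-a)..a, ∫ y in (-b)..b, G₁ x * G₂ y / (1 + x^2 * y^2))
      = ∫ x in (-a)..a, G₁ x * ((1/2) * E x) := by
    apply intervalIntegral.integral_congr_ae
    filter_upwards [h0] with x hx _
    exact hinner x hx
  rw [hstep3]
  have hG1E : IntervalIntegrable (fun x => G₁ x * ((1/2) * E x)) volume (-a) a := by
    apply IntervalIntegrable.mono_fun' (g := fun _ => b) intervalIntegrable_const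
      (hc₁.measurable.mul (hEmeas.const_mul (1/2))).aestronglyMeasurable.restrict
    apply Filter.Eventually.of_forall
    intro x
    simp only [Pi.mul_apply, Real.norm_eq_abs, abs_mul]
    have hg1 : |G₁ x| ≤ 1 := by
      rw [abs_le]
      exact ⟨by linarith [(hr₁ x).1], (hr₁ x).2⟩
    calc |G₁ x| * (|1/2| * |E x|) ≤ 1 * (|1/2| * (2*b)) := by
          apply mul_le_mul hg1 _ (by positivity) (by norm_num)
          exact mul_le_mul_of_nonneg_left (hEbound x) (by positivity)
      _ = b := by rw [abs_of_pos (by norm_num : (0:ℝ) < 1/2)]; ring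
  have hfa : IntervalIntegrable (fun x => (1/2) * E x) volume (-a) a :=
    (hEint _ _).const_mul _
  rw [key_sym hG1E hfa (fun x => by rw [hEeven x]) hs₁]
  rw [intervalIntegral.integral_const_mul]
  have hsplit : (∫ x in (-a)..a, E x) = (∫ x in (-a)..(0:ℝ), E x) + ∫ x in (0:ℝ)..a, E x :=
    (intervalIntegral.integral_add_adjacent_intervals (hEint _ _) (hEint _ _)).symm
  have hneg : (∫ x in (-a)..(0:ℝ), E x) = ∫ x in (0:ℝ)..a, E x := by
    have h1 := intervalIntegral.integral_comp_neg (a := (0:ℝ)) (b := a) E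
    rw [neg_zero] at h1
    rw [← h1]
    apply intervalIntegral.integral_congr
    intro x _
    exact hEeven x
  have hsub : (∫ x in (0:ℝ)..a, E x) = 2 * ∫ t in (0:ℝ)..1, Real.arctan t / t := by
    have h1 := intervalIntegral.integral_comp_mul_left (a := (0:ℝ)) (b := 1) E ha'
    rw [mul_zero, mul_one, smul_eq_mul] at h1
    have h2 : (∫ t in (0:ℝ)..1, E (a * t))
        = ∫ t in (0:ℝ)..1, a⁻¹ * (2 * (Real.arctan t / t)) := by
      apply intervalIntegral.integral_congr
      intro t _
      rw [hEdef]
      simp only []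
      have harg : a * t * b = t := by rw [hbdef]; field_simp
      rw [harg, mul_inv, div_eq_mul_inv]
      ring
    rw [h2, intervalIntegral.integral_const_mul] at h1
    have := congrArg (fun z => a * z) h1
    rw [← mul_assoc, mul_inv_cancel₀ ha', one_mul, ← mul_assoc, mul_inv_cancel₀ ha',
      one_mul] at this
    rw [← this, intervalIntegral.integral_const_mul]
  rw [hsplit, hneg, hsub, ← integral_arctan_div_eq_tsum]
  ring
end

section
/- ∫_{-1}^{1} ∫_{-1}^{1} (4 · arctan(e^x) · arctan(e^y)) / (π² (1 + x²y²)) dx dy = G, where G is Catalan's constant. -/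
open Real intervalIntegral MeasureTheory

/-- Symmetrization: `arctan (exp ·)` against an even weight on `[-1,1]`. -/
lemma catalan_aux_sym_int (k : ℝ → ℝ) (hk : Continuous k) (hke : ∀ x, k (-x) = k x) :
    ∫ x in (-1:ℝ)..1, Real.arctan (Real.exp x) * k x
      = (π/4) * ∫ x in (-1:ℝ)..1, k x := by
  have hf : Continuous fun x : ℝ => Real.arctan (Real.exp x) :=
    Real.continuous_arctan.comp Real.continuous_exp
  have hneg : (∫ x in (-1:ℝ)..1, Real.arctan (Real.exp (-x)) * k x)
      = ∫ x in (-1:ℝ)..1, Real.arctan (Real.exp x) * k x := by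
    have h := intervalIntegral.integral_comp_neg
      (fun x => Real.arctan (Real.exp x) * k x) (a := -1) (b := 1)
    simp only [neg_neg] at h
    rw [← h]
    exact intervalIntegral.integral_congr fun x _ => by rw [hke]
  have hadd : ∀ x : ℝ, Real.arctan (Real.exp (-x)) + Real.arctan (Real.exp x) = π/2 := by
    intro x
    rw [Real.exp_neg, Real.arctan_inv_of_pos (Real.exp_pos x)]
    ring
  have h1 : IntervalIntegrable (fun x => Real.arctan (Real.exp (-x)) * k x) volume (-1) 1 :=
    ((Real.continuous_arctan.comp (Real.continuous_exp.comp continuous_neg)).mul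
      hk).intervalIntegrable _ _
  have h2 : IntervalIntegrable (fun x => Real.arctan (Real.exp x) * k x) volume (-1) 1 :=
    (hf.mul hk).intervalIntegrable _ _
  have key : (∫ x in (-1:ℝ)..1, Real.arctan (Real.exp x) * k x)
      + ∫ x in (-1:ℝ)..1, Real.arctan (Real.exp x) * k x
      = (π/2) * ∫ x in (-1:ℝ)..1, k x := by
    nth_rewrite 1 [← hneg]
    rw [← intervalIntegral.integral_add h1 h2, ← intervalIntegral.integral_const_mul]
    exact intervalIntegral.integral_congr fun x _ => by rw [← add_mul, hadd]
  linarith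

/-- Integral of an even function over `[-1,1]`. -/
lemma catalan_aux_even_int (k : ℝ → ℝ) (hk : Continuous k) (hke : ∀ x, k (-x) = k x) :
    ∫ x in (-1:ℝ)..1, k x = 2 * ∫ x in (0:ℝ)..1, k x := by
  have h1 : IntervalIntegrable k volume (-1) 0 := hk.intervalIntegrable _ _
  have h2 : IntervalIntegrable k volume 0 1 := hk.intervalIntegrable _ _
  have hneg : (∫ x in (-1:ℝ)..0, k x) = ∫ x in (0:ℝ)..1, k x := by
    have h := intervalIntegral.integral_comp_neg k (a := 0) (b := 1)
    simp only [neg_zero] at h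
    rw [← h]
    exact intervalIntegral.integral_congr fun x _ => hke x
  rw [← intervalIntegral.integral_add_adjacent_intervals h1 h2, hneg]
  ring

lemma catalan_aux_hasSum {t : ℝ} (h0 : 0 ≤ t) (h1 : t < 1) :
    HasSum (fun k : ℕ => t^(4*k) - t^(4*k+2)) (1+t^2)⁻¹ := by
  have h4 : t^4 < 1 := pow_lt_one₀ h0 h1 (by norm_num)
  have hg : HasSum (fun k : ℕ => (1-t^2) * (t^4)^k) ((1-t^2) * (1 - t^4)⁻¹) :=
    (hasSum_geometric_of_lt_one (by positivity) h4).mul_left _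
  have hv : (1-t^2) * (1 - t^4)⁻¹ = (1+t^2)⁻¹ := by
    have hne : (1:ℝ) - t^2 ≠ 0 := by nlinarith
    have hne2 : (1:ℝ) + t^2 ≠ 0 := by positivity
    have hne4 : (1:ℝ) - t^4 ≠ 0 := by nlinarith
    field_simp
    ring
  rw [hv] at hg
  refine hg.congr_fun fun k => ?_
  rw [← pow_mul]
  ring

lemma catalan_aux_elem_int (y : ℝ) (n : ℕ) : ∫ x in (0:ℝ)..1, (x*y)^n = y^n/(n+1) := by
  simp_rw [mul_pow]
  rw [intervalIntegral.integral_mul_const, integral_pow]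
  simp
  ring

lemma catalan_aux_inner_int {y : ℝ} (hy0 : 0 ≤ y) (hy1 : y < 1) :
    ∫ x in (0:ℝ)..1, (1+x^2*y^2)⁻¹
      = ∑' k : ℕ, (y^(4*k)/(4*k+1) - y^(4*k+2)/(4*k+3)) := by
  have h01 : (0:ℝ) ≤ 1 := by norm_num
  set μ := volume.restrict (Set.Ioc (0:ℝ) 1) with hμ
  have hty : ∀ x ∈ Set.Ioc (0:ℝ) 1, 0 ≤ x*y ∧ x*y ≤ y := fun x hx =>
    ⟨mul_nonneg hx.1.le hy0, by nlinarith [hx.1.le, hx.2]⟩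
  have key : ∀ (k : ℕ), ∀ x ∈ Set.Ioc (0:ℝ) 1,
      ‖(x*y)^(4*k) - (x*y)^(4*k+2)‖ ≤ (y^4)^k := by
    intro k x hx
    obtain ⟨ht0, hty'⟩ := hty x hx
    have ht1 : x*y ≤ 1 := hty'.trans hy1.le
    have hmono : (x*y)^(4*k+2) ≤ (x*y)^(4*k) :=
      pow_le_pow_of_le_one ht0 ht1 (by omega)
    rw [Real.norm_eq_abs, abs_of_nonneg (sub_nonneg.mpr hmono)]
    calc (x*y)^(4*k) - (x*y)^(4*k+2) ≤ (x*y)^(4*k) := by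
          nlinarith [pow_nonneg ht0 (4*k+2)]
      _ ≤ y^(4*k) := pow_le_pow_left₀ ht0 hty' _
      _ = (y^4)^k := by rw [← pow_mul, Nat.mul_comm]
  have hF_int : ∀ k : ℕ, Integrable (fun x => (x*y)^(4*k) - (x*y)^(4*k+2)) μ := fun k =>
    Continuous.integrableOn_Ioc (by fun_prop)
  have hbound : ∀ k : ℕ, (∫ x, ‖(x*y)^(4*k) - (x*y)^(4*k+2)‖ ∂μ) ≤ (y^4)^k := by
    intro k
    calc (∫ x, ‖(x*y)^(4*k) - (x*y)^(4*k+2)‖ ∂μ)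
        ≤ ∫ _x, (y^4)^k ∂μ :=
          setIntegral_mono_on ((hF_int k).norm) (integrable_const _) measurableSet_Ioc (key k)
      _ = (y^4)^k := by simp [hμ, Real.volume_Ioc]
  have hsum : Summable fun k : ℕ => ∫ x, ‖(x*y)^(4*k) - (x*y)^(4*k+2)‖ ∂μ :=
    Summable.of_nonneg_of_le (fun k => integral_nonneg fun x => norm_nonneg _) hbound
      (summable_geometric_of_lt_one (by positivity) (pow_lt_one₀ hy0 hy1 (by norm_num)))
  have hswap := MeasureTheory.integral_tsum_of_summable_integral_norm hF_int hsum
  have hptsum : ∀ x ∈ Set.Ioc (0:ℝ) 1,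
      (1+x^2*y^2)⁻¹ = ∑' k : ℕ, ((x*y)^(4*k) - (x*y)^(4*k+2)) := by
    intro x hx
    obtain ⟨ht0, hty'⟩ := hty x hx
    rw [(catalan_aux_hasSum ht0 (lt_of_le_of_lt hty' hy1)).tsum_eq, mul_pow]
  calc (∫ x in (0:ℝ)..1, (1+x^2*y^2)⁻¹)
      = ∫ x in Set.Ioc (0:ℝ) 1, (1+x^2*y^2)⁻¹ := intervalIntegral.integral_of_le h01
    _ = ∫ x in Set.Ioc (0:ℝ) 1, (∑' k : ℕ, ((x*y)^(4*k) - (x*y)^(4*k+2))) :=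
        setIntegral_congr_fun measurableSet_Ioc fun x hx => hptsum x hx
    _ = ∑' k : ℕ, ∫ x, ((x*y)^(4*k) - (x*y)^(4*k+2)) ∂μ := hswap.symm
    _ = ∑' k : ℕ, (y^(4*k)/(4*k+1) - y^(4*k+2)/(4*k+3)) := by
        refine tsum_congr fun k => ?_
        rw [show (∫ x, ((x*y)^(4*k) - (x*y)^(4*k+2)) ∂μ)
              = ∫ x in (0:ℝ)..1, ((x*y)^(4*k) - (x*y)^(4*k+2)) from
            (intervalIntegral.integral_of_le h01).symm,
          intervalIntegral.integral_sub
            ((by fun_prop : Continuous fun x : ℝ => (x*y)^(4*k)).intervalIntegrable _ _)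
            ((by fun_prop : Continuous fun x : ℝ => (x*y)^(4*k+2)).intervalIntegrable _ _),
          catalan_aux_elem_int, catalan_aux_elem_int]
        push_cast
        ring

lemma catalan_aux_outer_val (k : ℕ) :
    (∫ y in (0:ℝ)..1, (y^(4*k)/(4*k+1) - y^(4*k+2)/(4*k+3)))
      = 1/(4*(k:ℝ)+1)^2 - 1/(4*(k:ℝ)+3)^2 := by
  have h1 : (4*(k:ℝ)+1) ≠ 0 := by positivity
  have h3 : (4*(k:ℝ)+3) ≠ 0 := by positivity
  rw [intervalIntegral.integral_sub
      (((continuous_pow (4*k)).div_const _).intervalIntegrable _ _)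
      (((continuous_pow (4*k+2)).div_const _).intervalIntegrable _ _),
    intervalIntegral.integral_div, intervalIntegral.integral_div,
    integral_pow, integral_pow]
  push_cast
  field_simp
  ring

lemma catalan_aux_base_summable : Summable (fun k : ℕ => 1/((k:ℝ)+1)^2) := by
  have h := (summable_nat_add_iff 1).mpr
    (summable_one_div_nat_pow.mpr (by norm_num : 1 < 2))
  exact h.congr fun n => by push_cast; ring

lemma catalan_aux_SA : Summable (fun k : ℕ => 1/(4*(k:ℝ)+1)^2) := by
  refine Summable.of_nonneg_of_le (fun k => by positivity) (fun k => ?_)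
    catalan_aux_base_summable
  apply one_div_le_one_div_of_le (by positivity)
  nlinarith [Nat.cast_nonneg (α := ℝ) k]

lemma catalan_aux_SB : Summable (fun k : ℕ => 1/(4*(k:ℝ)+3)^2) := by
  refine Summable.of_nonneg_of_le (fun k => by positivity) (fun k => ?_)
    catalan_aux_base_summable
  apply one_div_le_one_div_of_le (by positivity)
  nlinarith [Nat.cast_nonneg (α := ℝ) k]

lemma catalan_aux_outer_int :
    (∫ y in (0:ℝ)..1, ∫ x in (0:ℝ)..1, (1+x^2*y^2)⁻¹)
      = ∑' k : ℕ, (1/(4*(k:ℝ)+1)^2 - 1/(4*(k:ℝ)+3)^2) := by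
  have h01 : (0:ℝ) ≤ 1 := by norm_num
  set μ := volume.restrict (Set.Ioc (0:ℝ) 1) with hμ
  set G : ℕ → ℝ → ℝ := fun k y => y^(4*k)/(4*k+1) - y^(4*k+2)/(4*k+3) with hG
  have hGc : ∀ k, Continuous (G k) := fun k =>
    ((continuous_pow (4*k)).div_const _).sub ((continuous_pow (4*k+2)).div_const _)
  have hG_int : ∀ k, Integrable (G k) μ := fun k => (hGc k).integrableOn_Ioc
  have hGnn : ∀ (k : ℕ), ∀ y ∈ Set.Ioc (0:ℝ) 1, 0 ≤ G k y := by
    intro k y hy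
    have h0 : (0:ℝ) ≤ y := hy.1.le
    have h1 : y ≤ 1 := hy.2
    have hp : y^(4*k+2) ≤ y^(4*k) := pow_le_pow_of_le_one h0 h1 (by omega)
    have : y^(4*k+2)/(4*(k:ℝ)+3) ≤ y^(4*k)/(4*(k:ℝ)+1) :=
      div_le_div₀ (pow_nonneg h0 _) hp (by positivity)
        (by nlinarith [Nat.cast_nonneg (α := ℝ) k])
    simp only [hG]
    linarith [this]
  have hnormval : ∀ k : ℕ, (∫ y, ‖G k y‖ ∂μ) = 1/(4*(k:ℝ)+1)^2 - 1/(4*(k:ℝ)+3)^2 := by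
    intro k
    rw [show (∫ y, ‖G k y‖ ∂μ) = ∫ y in Set.Ioc (0:ℝ) 1, ‖G k y‖ from rfl,
      setIntegral_congr_fun measurableSet_Ioc (fun y hy => Real.norm_of_nonneg (hGnn k y hy)),
      ← intervalIntegral.integral_of_le h01]
    exact catalan_aux_outer_val k
  have hsum : Summable (fun k : ℕ => ∫ y, ‖G k y‖ ∂μ) := by
    refine Summable.congr ?_ (fun k => (hnormval k).symm)
    exact catalan_aux_SA.sub catalan_aux_SB
  have hswap := MeasureTheory.integral_tsum_of_summable_integral_norm hG_int hsum
  have hae : ∀ᵐ y ∂μ, (∫ x in (0:ℝ)..1, (1+x^2*y^2)⁻¹) = ∑' k : ℕ, G k y := by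
    have h1 : ∀ᵐ y : ℝ, y ≠ 1 := by
      rw [MeasureTheory.ae_iff]
      have : {y : ℝ | ¬ y ≠ 1} = {1} := by ext z; simp
      rw [this]
      exact Real.volume_singleton
    filter_upwards [ae_restrict_of_ae h1, ae_restrict_mem measurableSet_Ioc] with y hy1 hy2
    exact catalan_aux_inner_int hy2.1.le (lt_of_le_of_ne hy2.2 hy1)
  calc (∫ y in (0:ℝ)..1, ∫ x in (0:ℝ)..1, (1+x^2*y^2)⁻¹)
      = ∫ y, (∫ x in (0:ℝ)..1, (1+x^2*y^2)⁻¹) ∂μ := intervalIntegral.integral_of_le h01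
    _ = ∫ y, (∑' k : ℕ, G k y) ∂μ := integral_congr_ae hae
    _ = ∑' k : ℕ, ∫ y, G k y ∂μ := hswap.symm
    _ = ∑' k : ℕ, (1/(4*(k:ℝ)+1)^2 - 1/(4*(k:ℝ)+3)^2) := by
        refine tsum_congr fun k => ?_
        rw [← intervalIntegral.integral_of_le h01]
        exact catalan_aux_outer_val k

lemma catalan_aux_tsum_id :
    ∑' k : ℕ, (1/(4*(k:ℝ)+1)^2 - 1/(4*(k:ℝ)+3)^2)
      = ∑' n : ℕ, (-1:ℝ)^n/(2*(n:ℝ)+1)^2 := by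
  have hef : ∀ k : ℕ, (-1:ℝ)^(2*k)/(2*((2*k : ℕ):ℝ)+1)^2 = 1/(4*(k:ℝ)+1)^2 := by
    intro k
    have h : (-1:ℝ)^(2*k) = 1 := by rw [pow_mul]; norm_num
    rw [h]; push_cast; ring_nf
  have hof : ∀ k : ℕ, (-1:ℝ)^(2*k+1)/(2*((2*k+1 : ℕ):ℝ)+1)^2 = -(1/(4*(k:ℝ)+3)^2) := by
    intro k
    have h : (-1:ℝ)^(2*k+1) = -1 := by rw [pow_succ, pow_mul]; norm_num
    rw [h]; push_cast; ring_nf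
  have hSe : Summable (fun k : ℕ => (-1:ℝ)^(2*k)/(2*((2*k : ℕ):ℝ)+1)^2) :=
    catalan_aux_SA.congr fun k => (hef k).symm
  have hSo : Summable (fun k : ℕ => (-1:ℝ)^(2*k+1)/(2*((2*k+1 : ℕ):ℝ)+1)^2) :=
    catalan_aux_SB.neg.congr fun k => (hof k).symm
  have key := tsum_even_add_odd (f := fun n : ℕ => (-1:ℝ)^n/(2*(n:ℝ)+1)^2) hSe hSo
  rw [← key, tsum_congr hef, tsum_congr hof, tsum_neg,
    Summable.tsum_sub catalan_aux_SA catalan_aux_SB]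
  ring

theorem catalan_hyperbolic_secant :
    ∫ y in (-1:ℝ)..1, ∫ x in (-1:ℝ)..1,
        4 * Real.arctan (Real.exp x) * Real.arctan (Real.exp y) /
          (Real.pi^2 * (1 + x^2 * y^2))
      = ∑' n : ℕ, (-1 : ℝ)^n / (2 * n + 1)^2 := by
  have hπ : Real.pi ≠ 0 := Real.pi_ne_zero
  have hkc : ∀ y : ℝ, Continuous fun x : ℝ => (1+x^2*y^2)⁻¹ := fun y =>
    Continuous.inv₀ (by fun_prop) (fun x => by positivity)
  set K : ℝ → ℝ := fun y => ∫ x in (-1:ℝ)..1, (1+x^2*y^2)⁻¹ with hKdef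
  have hKc : Continuous K := by
    have : Continuous fun p : ℝ × ℝ => (1+p.2^2*p.1^2)⁻¹ :=
      Continuous.inv₀ (by fun_prop) (fun p => by positivity)
    exact intervalIntegral.continuous_parametric_intervalIntegral_of_continuous'
      (f := fun y x => (1+x^2*y^2)⁻¹) this (-1) 1
  have hKe : ∀ y, K (-y) = K y := by
    intro y
    simp only [hKdef]
    exact intervalIntegral.integral_congr fun x _ => by ring_nf
  have inner_eq : ∀ y : ℝ,
      (∫ x in (-1:ℝ)..1, 4 * Real.arctan (Real.exp x) * Real.arctan (Real.exp y) /
          (Real.pi^2 * (1 + x^2 * y^2)))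
        = Real.arctan (Real.exp y) * ((1/π) * K y) := by
    intro y
    have step1 : (∫ x in (-1:ℝ)..1, 4 * Real.arctan (Real.exp x) * Real.arctan (Real.exp y) /
          (Real.pi^2 * (1 + x^2 * y^2)))
        = (4 * Real.arctan (Real.exp y) / π^2)
            * ∫ x in (-1:ℝ)..1, Real.arctan (Real.exp x) * (1+x^2*y^2)⁻¹ := by
      rw [← intervalIntegral.integral_const_mul]
      exact intervalIntegral.integral_congr fun x _ => by
        rw [div_eq_mul_inv, mul_inv]; ring
    rw [step1, catalan_aux_sym_int _ (hkc y) (fun x => by ring_nf)]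
    have hsc : ∀ c : ℝ, 4 * Real.arctan (Real.exp y) / π^2 * (π/4 * c)
        = Real.arctan (Real.exp y) * (1/π * c) := by
      intro c; field_simp
    exact hsc _
  have step2 : (∫ y in (-1:ℝ)..1, ∫ x in (-1:ℝ)..1,
        4 * Real.arctan (Real.exp x) * Real.arctan (Real.exp y) /
          (Real.pi^2 * (1 + x^2 * y^2)))
      = (π/4) * ∫ y in (-1:ℝ)..1, (1/π) * K y := by
    rw [intervalIntegral.integral_congr (fun y _ => inner_eq y)]
    exact catalan_aux_sym_int _ (continuous_const.mul hKc) (fun y => by rw [hKe])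
  have hKval : ∀ y : ℝ, K y = 2 * ∫ x in (0:ℝ)..1, (1+x^2*y^2)⁻¹ := fun y =>
    catalan_aux_even_int _ (hkc y) (fun x => by ring_nf)
  have hcongr : (∫ y in (0:ℝ)..1, K y)
      = ∫ y in (0:ℝ)..1, 2 * ∫ x in (0:ℝ)..1, (1+x^2*y^2)⁻¹ :=
    intervalIntegral.integral_congr fun y _ => hKval y
  rw [step2, intervalIntegral.integral_const_mul,
    catalan_aux_even_int K hKc hKe, hcongr,
    intervalIntegral.integral_const_mul, catalan_aux_outer_int, catalan_aux_tsum_id]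
  generalize (∑' n : ℕ, (-1 : ℝ)^n / (2 * (n:ℝ) + 1)^2) = S
  field_simp
  ring
end

section
/- ∫_{-1}^{1} ∫_{-1}^{1} Φ(x)Φ(y)/(1 + x²y²) dx dy = G, where Φ(x) = (1/√(2π)) ∫_{-∞}^{x} e^{-t²/2} dt is the standard normal cumulative distribution function and G is Catalan's constant. -/
noncomputable def stdNormalCDF (x : ℝ) : ℝ :=
  (1 / Real.sqrt (2 * Real.pi)) * ∫ t in Set.Iic x, Real.exp (-t^2 / 2)

open Real MeasureTheory Set intervalIntegral

lemma gauss_eq : (fun t : ℝ => Real.exp (-t^2 / 2)) = fun t : ℝ => Real.exp (-(1/2) * t^2) := by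
  funext t; ring_nf

lemma gauss_integrable : Integrable (fun t : ℝ => Real.exp (-t^2 / 2)) := by
  rw [gauss_eq]
  exact integrable_exp_neg_mul_sq (by norm_num)

lemma gauss_total : (∫ t : ℝ, Real.exp (-t^2 / 2)) = Real.sqrt (2 * π) := by
  rw [gauss_eq, integral_gaussian]
  rw [show π / (1/2 : ℝ) = 2 * π by ring]

lemma phi_add_neg (x : ℝ) : stdNormalCDF x + stdNormalCDF (-x) = 1 := by
  unfold stdNormalCDF
  have h1 : (∫ t in Set.Iic (-x), Real.exp (-t^2 / 2))
      = ∫ t in Set.Ioi x, Real.exp (-t^2 / 2) := by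
    have := integral_comp_neg_Iic (-x) (fun t => Real.exp (-t^2 / 2))
    simp only [neg_neg] at this
    rw [← this]
    congr 1; funext t; ring_nf
  have h2 : (∫ t in Set.Iic x, Real.exp (-t^2 / 2))
        + (∫ t in Set.Ioi x, Real.exp (-t^2 / 2)) = Real.sqrt (2 * π) := by
    rw [← gauss_total]
    have := MeasureTheory.integral_add_compl (measurableSet_Iic (a := x)) gauss_integrable
    rwa [Set.compl_Iic] at this
  have hpos : (0:ℝ) < Real.sqrt (2 * π) := Real.sqrt_pos.mpr (by positivity)
  rw [h1, ← mul_add, h2]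
  field_simp

lemma phi_cont : Continuous stdNormalCDF := by
  unfold stdNormalCDF
  have h : ∀ x : ℝ, (∫ t in Set.Iic x, Real.exp (-t^2 / 2))
      = (∫ t in Set.Iic 0, Real.exp (-t^2 / 2)) + ∫ t in (0:ℝ)..x, Real.exp (-t^2 / 2) := by
    intro x
    have := intervalIntegral.integral_Iic_sub_Iic
      (gauss_integrable.integrableOn (s := Set.Iic (0:ℝ)))
      (gauss_integrable.integrableOn (s := Set.Iic x))
    linarith
  have heq : (fun x : ℝ => (1 / Real.sqrt (2 * π)) * ∫ t in Set.Iic x, Real.exp (-t^2 / 2))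
      = fun x : ℝ => (1 / Real.sqrt (2 * π)) * ((∫ t in Set.Iic 0, Real.exp (-t^2 / 2))
        + ∫ t in (0:ℝ)..x, Real.exp (-t^2 / 2)) := by
    funext x; rw [h x]
  rw [heq]
  exact continuous_const.mul (continuous_const.add
    (gauss_integrable.continuous_primitive 0))

lemma sym_lemma {h : ℝ → ℝ} (hc : Continuous h) (he : ∀ x, h (-x) = h x) :
    (∫ x in (-1:ℝ)..1, stdNormalCDF x * h x) = (1/2) * ∫ x in (-1:ℝ)..1, h x := by
  have key : (∫ x in (-1:ℝ)..1, stdNormalCDF x * h x)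
      = ∫ x in (-1:ℝ)..1, stdNormalCDF (-x) * h x := by
    have h2 := intervalIntegral.integral_comp_neg (a := (-1:ℝ)) (b := 1)
      (fun x => stdNormalCDF x * h x)
    simp only [he, neg_neg] at h2
    exact h2.symm
  have hint1 : IntervalIntegrable (fun x => stdNormalCDF x * h x) volume (-1) 1 :=
    (phi_cont.mul hc).intervalIntegrable _ _
  have hint2 : IntervalIntegrable (fun x => stdNormalCDF (-x) * h x) volume (-1) 1 :=
    ((phi_cont.comp continuous_neg).mul hc).intervalIntegrable _ _
  have hsum : (∫ x in (-1:ℝ)..1, stdNormalCDF x * h x)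
      + (∫ x in (-1:ℝ)..1, stdNormalCDF (-x) * h x) = ∫ x in (-1:ℝ)..1, h x := by
    rw [← intervalIntegral.integral_add hint1 hint2]
    congr 1; funext x
    rw [← add_mul, phi_add_neg, one_mul]
  linarith [key, hsum]

lemma even_interval {h : ℝ → ℝ} (hc : Continuous h) (he : ∀ x, h (-x) = h x) :
    (∫ x in (-1:ℝ)..1, h x) = 2 * ∫ x in (0:ℝ)..1, h x := by
  have h1 : (∫ x in (-1:ℝ)..(0:ℝ), h x) = ∫ x in (0:ℝ)..1, h x := by
    have h2 := intervalIntegral.integral_comp_neg (a := (0:ℝ)) (b := 1) h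
    simp only [he, neg_zero] at h2
    exact h2.symm
  rw [← intervalIntegral.integral_add_adjacent_intervals
    ((hc.intervalIntegrable (-1) 0)) ((hc.intervalIntegrable 0 1)), h1]
  ring

lemma inner_arctan {y : ℝ} (hy : y ≠ 0) :
    (∫ x in (0:ℝ)..1, 1 / (1 + x^2 * y^2)) = Real.arctan y / y := by
  have h1 : (∫ x in (0:ℝ)..1, 1 / (1 + x^2 * y^2))
      = ∫ x in (0:ℝ)..1, (fun u => 1 / (1 + u^2)) (x * y) := by
    congr 1; funext x; simp [mul_pow]
  rw [h1, intervalIntegral.integral_comp_mul_right (fun u => 1 / (1 + u^2)) hy]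
  simp only [zero_mul, one_mul, smul_eq_mul]
  rw [integral_one_div_one_add_sq, Real.arctan_zero]
  field_simp
  simp

lemma summable_odd_sq : Summable (fun n : ℕ => 1 / ((2 * (n:ℝ) + 1))^2) := by
  have h : Summable (fun n : ℕ => 1 / ((n:ℝ) + 1)^2) := by
    have h2 := (Real.summable_one_div_nat_pow (p := 2)).mpr one_lt_two
    have h3 := (summable_nat_add_iff 1).mpr h2
    refine h3.congr fun n => ?_
    push_cast
    ring
  apply h.of_nonneg_of_le (fun n => by positivity)
  intro n
  apply one_div_le_one_div_of_le (by positivity)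
  nlinarith [Nat.cast_nonneg (α := ℝ) n]

lemma arctan_div_integral :
    (∫ y in (0:ℝ)..1, Real.arctan y / y) = ∑' n : ℕ, (-1 : ℝ)^n / (2 * n + 1)^2 := by
  rw [intervalIntegral.integral_of_le zero_le_one]
  have hmem : ∀ᵐ y ∂(volume.restrict (Set.Ioc (0:ℝ) 1)), y ∈ Set.Ioo (0:ℝ) 1 := by
    rw [ae_iff, Measure.restrict_apply' measurableSet_Ioc]
    refine measure_mono_null (fun z hz => ?_) (measure_singleton (1:ℝ))
    simp only [Set.mem_inter_iff, Set.mem_setOf_eq, Set.mem_Ioo, Set.mem_Ioc, not_and,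
      not_lt, Set.mem_singleton_iff] at hz ⊢
    exact le_antisymm hz.2.2 (hz.1 hz.2.1)
  have hae : ∀ᵐ y ∂(volume.restrict (Set.Ioc (0:ℝ) 1)),
      Real.arctan y / y = ∑' n : ℕ, (-1:ℝ)^n * y^(2*n) / (2*(n:ℝ) + 1) := by
    filter_upwards [hmem] with y hy
    have hnorm : ‖y‖ < 1 := by
      rw [Real.norm_eq_abs, abs_of_pos hy.1]; exact hy.2
    have hy0 : y ≠ 0 := ne_of_gt hy.1
    have hs2 : HasSum (fun n : ℕ => (-1:ℝ)^n * y^(2*n) / (2*(n:ℝ) + 1))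
        (Real.arctan y / y) := by
      have h3 := (Real.hasSum_arctan hnorm).div_const y
      convert h3 using 2 with n
      · rfl
      push_cast
      field_simp
      ring
    exact hs2.tsum_eq.symm
  rw [MeasureTheory.integral_congr_ae hae]
  have hint : ∀ n : ℕ, Integrable (fun y : ℝ => (-1:ℝ)^n * y^(2*n) / (2*(n:ℝ) + 1))
      (volume.restrict (Set.Ioc (0:ℝ) 1)) := by
    intro n
    apply Continuous.integrableOn_Ioc
    fun_prop
  have hval : ∀ n : ℕ, (∫ y in Set.Ioc (0:ℝ) 1, y^(2*n)) = 1 / (2*(n:ℝ) + 1) := by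
    intro n
    rw [← intervalIntegral.integral_of_le zero_le_one, integral_pow]
    push_cast
    norm_num
  have hnorm_eq : ∀ n : ℕ, (fun y : ℝ => ‖(-1:ℝ)^n * y^(2*n) / (2*(n:ℝ) + 1)‖)
      = fun y : ℝ => y^(2*n) / (2*(n:ℝ) + 1) := by
    intro n
    funext y
    rw [Real.norm_eq_abs, abs_div, abs_mul, abs_pow, abs_pow, abs_neg, abs_one, one_pow,
      one_mul, (even_two_mul n).pow_abs, abs_of_pos (by positivity)]
  have hsum : Summable (fun n : ℕ => ∫ y in Set.Ioc (0:ℝ) 1,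
      ‖(-1:ℝ)^n * y^(2*n) / (2*(n:ℝ) + 1)‖) := by
    apply Summable.congr summable_odd_sq
    intro n
    rw [hnorm_eq n]
    rw [MeasureTheory.integral_div, hval n]
    field_simp
  rw [← MeasureTheory.integral_tsum_of_summable_integral_norm hint hsum]
  congr 1
  funext n
  rw [MeasureTheory.integral_div, MeasureTheory.integral_const_mul, hval n]
  field_simp

theorem catalan_normal_cdf :
    ∫ y in (-1:ℝ)..1, ∫ x in (-1:ℝ)..1,
        stdNormalCDF x * stdNormalCDF y / (1 + x^2 * y^2)
      = ∑' n : ℕ, (-1 : ℝ)^n / (2 * n + 1)^2 := by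
  have hden : ∀ x y : ℝ, (0:ℝ) < 1 + x^2 * y^2 := fun x y => by positivity
  set J : ℝ → ℝ := fun y => ∫ x in (-1:ℝ)..1, 1 / (1 + x^2 * y^2) with hJ
  have hJcont : Continuous J := by
    apply intervalIntegral.continuous_parametric_intervalIntegral_of_continuous'
      (f := fun y x => 1 / (1 + x^2 * y^2)) (μ := volume)
    apply continuous_const.div
    · fun_prop
    · intro p; exact ne_of_gt (hden p.2 p.1)
  have hJeven : ∀ y, J (-y) = J y := by
    intro y; simp only [hJ]; congr 1; funext x; rw [neg_sq]
  -- inner integral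
  have inner : ∀ y : ℝ, (∫ x in (-1:ℝ)..1, stdNormalCDF x * stdNormalCDF y / (1 + x^2 * y^2))
      = stdNormalCDF y * ((1/2) * J y) := by
    intro y
    have h1 : (∫ x in (-1:ℝ)..1, stdNormalCDF x * stdNormalCDF y / (1 + x^2 * y^2))
        = ∫ x in (-1:ℝ)..1, stdNormalCDF x * (stdNormalCDF y / (1 + x^2 * y^2)) := by
      congr 1; funext x; ring
    have hc : Continuous (fun x : ℝ => stdNormalCDF y / (1 + x^2 * y^2)) := by
      apply continuous_const.div
      · fun_prop
      · intro x; exact ne_of_gt (hden x y)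
    have he : ∀ x : ℝ, stdNormalCDF y / (1 + (-x)^2 * y^2) = stdNormalCDF y / (1 + x^2 * y^2) := by
      intro x; rw [neg_sq]
    rw [h1, sym_lemma hc he]
    have h2 : (∫ x in (-1:ℝ)..1, stdNormalCDF y / (1 + x^2 * y^2))
        = stdNormalCDF y * J y := by
      rw [hJ, ← intervalIntegral.integral_const_mul]
      congr 1; funext x; ring
    rw [h2]; ring
  rw [intervalIntegral.integral_congr (fun y _ => inner y)]
  have hgc : Continuous (fun y : ℝ => (1/2) * J y) := continuous_const.mul hJcont
  have hge : ∀ y : ℝ, (1/2) * J (-y) = (1/2) * J y := fun y => by rw [hJeven]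
  rw [sym_lemma hgc hge]
  rw [even_interval hgc hge]
  have hred : (1/2 : ℝ) * (2 * ∫ y in (0:ℝ)..1, (1/2) * J y)
      = ∫ y in (0:ℝ)..1, (1/2) * J y := by ring
  rw [hred]
  -- now ∫ y in 0..1, (1/2) * J y = ∫ y in 0..1, arctan y / y
  have hhalfJ : ∀ y ∈ Set.Ioc (0:ℝ) 1, (1/2) * J y = Real.arctan y / y := by
    intro y hy
    have hy0 : y ≠ 0 := ne_of_gt hy.1
    have hc : Continuous (fun x : ℝ => 1 / (1 + x^2 * y^2)) := by
      apply continuous_const.div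
      · fun_prop
      · intro x; exact ne_of_gt (hden x y)
    have he : ∀ x : ℝ, (1:ℝ) / (1 + (-x)^2 * y^2) = 1 / (1 + x^2 * y^2) := by
      intro x; rw [neg_sq]
    rw [hJ]
    simp only
    rw [even_interval hc he, inner_arctan hy0]
    ring
  rw [intervalIntegral.integral_of_le zero_le_one,
    MeasureTheory.setIntegral_congr_fun measurableSet_Ioc hhalfJ,
    ← intervalIntegral.integral_of_le zero_le_one]
  exact arctan_div_integral
end

section
/- ∫_{-1}^{1} ((1 + x)/(2x)) · arctan x dx = G, where G is Catalan's constant. -/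
open MeasureTheory Set

private lemma my_arctan_le_self {x : ℝ} (hx : 0 ≤ x) : Real.arctan x ≤ x := by
  rcases eq_or_lt_of_le hx with h | h
  · simp [← h]
  · have h1 : 0 < Real.arctan x := by
      have := Real.arctan_strictMono h
      rwa [Real.arctan_zero] at this
    have h2 := Real.lt_tan h1 (Real.arctan_lt_pi_div_two x)
    rw [Real.tan_arctan] at h2
    exact h2.le

private lemma my_intervalIntegrable {g : ℝ → ℝ} (hm : Measurable g)
    (hb : ∀ x, |g x| ≤ 2) (a b : ℝ) : IntervalIntegrable g volume a b := by
  rw [intervalIntegrable_iff]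
  have hconst : IntegrableOn (fun _ : ℝ => (2:ℝ)) (Set.uIoc a b) volume := by
    apply integrableOn_const (hs := ?_)
    rw [Set.uIoc]
    exact measure_Ioc_lt_top.ne
  exact hconst.mono' hm.aestronglyMeasurable
    (Filter.Eventually.of_forall fun x => by simpa [Real.norm_eq_abs] using hb x)

private lemma ioo_integral_pow {c : ℝ} (hc : 0 ≤ c) (k : ℕ) :
    ∫ t in Ioo (0:ℝ) c, t ^ k = c ^ (k+1) / (k+1) := by
  rw [← integral_Ioc_eq_integral_Ioo, ← intervalIntegral.integral_of_le hc,
    integral_pow]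
  simp

private lemma ioo_lintegral_nn {c : ℝ} {g : ℝ → ℝ} (hgc : Continuous g)
    (hg : ∀ t, 0 ≤ g t) :
    ∫⁻ t in Ioo (0:ℝ) c, ‖g t‖₊ = ENNReal.ofReal (∫ t in Ioo (0:ℝ) c, g t) := by
  have h1 : ∀ t : ℝ, (‖g t‖₊ : ENNReal) = ENNReal.ofReal (g t) := fun t =>
    Real.enorm_eq_ofReal (hg t)
  simp_rw [h1]
  exact (ofReal_integral_eq_lintegral_ofReal
    (hgc.integrableOn_Icc.mono_set Ioo_subset_Icc_self)
    (Filter.Eventually.of_forall hg)).symm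

private lemma nnnorm_negpow_mul (n : ℕ) (a : ℝ) : ‖(-1:ℝ)^n * a‖₊ = ‖a‖₊ := by
  rw [nnnorm_mul, nnnorm_pow, nnnorm_neg, nnnorm_one, one_pow, one_mul]

private lemma arctan_div_eq_tsum {x : ℝ} (hx : x ∈ Ioo (0:ℝ) 1) :
    Real.arctan x / x = ∑' n : ℕ, (-1:ℝ)^n * x^(2*n) / (2*n+1) := by
  obtain ⟨hx0, hx1⟩ := hx
  have hs : HasSum (fun n : ℕ => (-1:ℝ)^n * x^(2*n+1) / ((2*n+1 : ℕ) : ℝ))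
      (Real.arctan x) := Real.hasSum_arctan (by rw [Real.norm_eq_abs, abs_of_pos hx0]; exact hx1)
  have hs2 := hs.div_const x
  rw [← hs2.tsum_eq]
  refine tsum_congr fun n => ?_
  have hxne : x ≠ 0 := hx0.ne'
  rw [pow_succ]
  push_cast
  field_simp

theorem catalan_linear_weight :
    ∫ x in (-1:ℝ)..1, (1 + x) / (2 * x) * Real.arctan x
      = ∑' n : ℕ, (-1 : ℝ)^n / (2 * n + 1)^2 := by
  set f : ℝ → ℝ := fun x => (1 + x) / (2 * x) * Real.arctan x with hf
  have hmeas : Measurable f := by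
    apply Measurable.mul
    · exact (measurable_const.add measurable_id).div (measurable_const.mul measurable_id)
    · exact Real.continuous_arctan.measurable
  have hbound : ∀ x : ℝ, |f x| ≤ 2 := by
    intro x
    rcases lt_trichotomy x 0 with h | h | h
    · -- x < 0
      have harc : Real.arctan x ≤ 0 := by
        rw [← Real.arctan_zero]
        exact Real.arctan_strictMono.monotone h.le
      have harc2 : x ≤ Real.arctan x := by
        have := my_arctan_le_self (x := -x) (by linarith)
        rw [Real.arctan_neg] at this
        linarith
      rcases le_or_gt (-1) x with h1 | h1
      · -- -1 ≤ x < 0 : coeff ≤ 0, f x ∈ [0, (1+x)/2]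
        have hc : (1 + x) / (2 * x) ≤ 0 :=
          div_nonpos_iff.2 (Or.inl ⟨by linarith, by linarith⟩)
        have hnn : 0 ≤ f x := by
          have := mul_nonneg (neg_nonneg.2 hc) (neg_nonneg.2 harc)
          rwa [neg_mul_neg] at this
        have hub : f x ≤ (1 + x) / (2 * x) * x :=
          mul_le_mul_of_nonpos_left harc2 hc
        have hxne : x ≠ 0 := ne_of_lt h
        have : (1 + x) / (2 * x) * x = (1 + x) / 2 := by
          field_simp
        rw [this] at hub
        rw [abs_of_nonneg hnn]
        linarith
      · -- x < -1 : |coeff| ≤ 1, |arctan| ≤ π/2 < 2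
        have hc : |(1 + x) / (2 * x)| ≤ 1 := by
          rw [abs_div, div_le_one (by rw [abs_mul]; simp [abs_of_neg h]; linarith)]
          rw [abs_mul, abs_of_neg h]
          rw [abs_of_nonpos (by linarith : 1 + x ≤ 0)]
          simp only [abs_two]
          linarith
        have ha : |Real.arctan x| ≤ 2 := by
          rw [abs_le]
          constructor
          · nlinarith [Real.neg_pi_div_two_lt_arctan x, Real.pi_le_four]
          · nlinarith [Real.arctan_lt_pi_div_two x, Real.pi_le_four]
        calc |f x| = |(1 + x) / (2 * x)| * |Real.arctan x| := abs_mul _ _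
          _ ≤ 1 * 2 := mul_le_mul hc ha (abs_nonneg _) (by norm_num)
          _ = 2 := by norm_num
    · simp [hf, h]
    · -- 0 < x
      have harc : 0 ≤ Real.arctan x := by
        rw [← Real.arctan_zero]
        exact Real.arctan_strictMono.monotone h.le
      have harc2 : Real.arctan x ≤ x := my_arctan_le_self h.le
      rcases le_or_gt x 1 with h1 | h1
      · have hc : 0 ≤ (1 + x) / (2 * x) := by positivity
        have hnn : 0 ≤ f x := mul_nonneg hc harc
        have hub : f x ≤ (1 + x) / (2 * x) * x := mul_le_mul_of_nonneg_left harc2 hc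
        have : (1 + x) / (2 * x) * x = (1 + x) / 2 := by
          field_simp
        rw [this] at hub
        rw [abs_of_nonneg hnn]
        linarith
      · have hc : |(1 + x) / (2 * x)| ≤ 1 := by
          rw [abs_div, div_le_one (by rw [abs_mul]; simp [abs_of_pos h]; linarith)]
          rw [abs_mul, abs_of_pos h, abs_of_nonneg (by linarith : (0:ℝ) ≤ 1 + x)]
          simp only [abs_two]
          linarith
        have ha : |Real.arctan x| ≤ 2 := by
          rw [abs_le]
          constructor
          · nlinarith [Real.neg_pi_div_two_lt_arctan x, Real.pi_le_four]
          · nlinarith [Real.arctan_lt_pi_div_two x, Real.pi_le_four]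
        calc |f x| = |(1 + x) / (2 * x)| * |Real.arctan x| := abs_mul _ _
          _ ≤ 1 * 2 := mul_le_mul hc ha (abs_nonneg _) (by norm_num)
          _ = 2 := by norm_num
  have hmeasneg : Measurable (fun x => f (-x)) := hmeas.comp measurable_neg
  have hboundneg : ∀ x : ℝ, |f (-x)| ≤ 2 := fun x => hbound (-x)
  have h1 : ∫ x in (-1:ℝ)..1, f x
      = (∫ x in (0:ℝ)..1, f (-x)) + ∫ x in (0:ℝ)..1, f x := by
    rw [intervalIntegral.integral_comp_neg, neg_zero]
    exact (intervalIntegral.integral_add_adjacent_intervals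
      (my_intervalIntegrable hmeas hbound _ _)
      (my_intervalIntegrable hmeas hbound _ _)).symm
  have h2 : (∫ x in (0:ℝ)..1, f (-x)) + ∫ x in (0:ℝ)..1, f x
      = ∫ x in (0:ℝ)..1, Real.arctan x / x := by
    rw [← intervalIntegral.integral_add
      (my_intervalIntegrable hmeasneg hboundneg 0 1)
      (my_intervalIntegrable hmeas hbound 0 1)]
    apply intervalIntegral.integral_congr
    intro x _
    show f (-x) + f x = Real.arctan x / x
    by_cases hx : x = 0
    · simp [hf, hx]
    · simp only [hf, Real.arctan_neg]
      field_simp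
      ring
  have h3 : ∫ x in (0:ℝ)..1, Real.arctan x / x
      = ∑' n : ℕ, (-1 : ℝ)^n / (2 * n + 1)^2 := by
    rw [intervalIntegral.integral_of_le zero_le_one, integral_Ioc_eq_integral_Ioo,
      setIntegral_congr_fun measurableSet_Ioo (fun x hx => arctan_div_eq_tsum hx)]
    rw [MeasureTheory.integral_tsum]
    · refine tsum_congr fun n => ?_
      simp_rw [mul_div_assoc]
      rw [MeasureTheory.integral_const_mul, MeasureTheory.integral_div,
        ioo_integral_pow zero_le_one]
      push_cast
      rw [one_pow, div_div, ← pow_two, mul_one_div]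
    · intro n
      exact ((continuous_const.mul (continuous_pow (2*n))).div_const _).aestronglyMeasurable
    · have hval : ∀ n : ℕ, ∫⁻ x in Ioo (0:ℝ) 1, ‖(-1:ℝ)^n * x^(2*n) / (2*n+1)‖₊
          = ENNReal.ofReal (1 / ((2*n+1 : ℝ))^2) := by
        intro n
        have heq : ∀ x : ℝ, ‖(-1:ℝ)^n * x^(2*n) / (2*n+1)‖₊
            = ‖x^(2*n) / (2*(n:ℝ)+1)‖₊ := by
          intro x
          rw [mul_div_assoc, nnnorm_negpow_mul]
        simp_rw [heq]
        rw [ioo_lintegral_nn ((continuous_pow (2*n)).div_const _)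
          (fun t => div_nonneg ((even_two_mul n).pow_nonneg t) (by positivity))]
        rw [MeasureTheory.integral_div, ioo_integral_pow zero_le_one]
        congr 1
        push_cast
        rw [one_pow, div_div, ← pow_two]
      simp_rw [enorm_eq_nnnorm, hval]
      have hsum : Summable (fun n : ℕ => 1 / (2*(n:ℝ)+1)^2) := by
        have h0 : Summable (fun n : ℕ => 1 / ((n:ℝ))^2) :=
          Real.summable_one_div_nat_pow.2 (by norm_num)
        have h1 : Summable (fun n : ℕ => 1 / ((n:ℝ)+1)^2) := by
          have := (summable_nat_add_iff 1).2 h0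
          simpa using this
        refine h1.of_nonneg_of_le (fun n => by positivity) fun n => ?_
        apply one_div_le_one_div_of_le (by positivity)
        have : ((n:ℝ)+1) ≤ 2*(n:ℝ)+1 := by
          have : (0:ℝ) ≤ n := Nat.cast_nonneg n
          linarith
        nlinarith [Nat.cast_nonneg (α := ℝ) n]
      rw [← ENNReal.ofReal_tsum_of_nonneg (fun n => by positivity) hsum]
      exact ENNReal.ofReal_ne_top
  rw [h1, h2, h3]
end

section
/- ∫_{-1}^{1} (π/2 + arcsin x) · (arctan x)/(π x) dx = G, where G is Catalan's constant. -/
open Real MeasureTheory intervalIntegral Set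

lemma abs_arctan_le_abs (x : ℝ) : |Real.arctan x| ≤ |x| := by
  wlog hx : 0 ≤ x with H
  · push_neg at hx
    have := H (-x) (by linarith)
    rwa [Real.arctan_neg, abs_neg, abs_neg] at this
  have han : 0 ≤ Real.arctan x := by
    rw [← Real.arctan_zero]; exact Real.arctan_strictMono.monotone hx
  rw [abs_of_nonneg hx, abs_of_nonneg han]
  calc Real.arctan x ≤ Real.tan (Real.arctan x) :=
        Real.le_tan han (Real.arctan_lt_pi_div_two x)
    _ = x := Real.tan_arctan x

noncomputable def gfun : ℝ → ℝ :=
  fun x => (Real.pi / 2 + Real.arcsin x) * (Real.arctan x / (Real.pi * x))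

lemma gfun_meas : Measurable gfun :=
  (measurable_const.add Real.continuous_arcsin.measurable).mul
    (Real.continuous_arctan.measurable.div (measurable_const.mul measurable_id))

lemma gfun_abs_le (x : ℝ) : |gfun x| ≤ 1 := by
  rcases eq_or_ne x 0 with rfl | hx
  · simp [gfun]
  have hπ := Real.pi_pos
  have h1 : |Real.pi / 2 + Real.arcsin x| ≤ Real.pi := by
    have := Real.arcsin_le_pi_div_two x
    have := Real.neg_pi_div_two_le_arcsin x
    rw [abs_le]; constructor <;> linarith
  have h2 : |Real.arctan x / (Real.pi * x)| ≤ 1 / Real.pi := by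
    rw [abs_div, abs_mul, abs_of_pos hπ, div_le_div_iff₀ (by positivity) hπ]
    calc |Real.arctan x| * Real.pi ≤ |x| * Real.pi := by
          exact mul_le_mul_of_nonneg_right (abs_arctan_le_abs x) hπ.le
      _ = 1 * (Real.pi * |x|) := by ring
  calc |gfun x| = |Real.pi / 2 + Real.arcsin x| * |Real.arctan x / (Real.pi * x)| := abs_mul _ _
    _ ≤ Real.pi * (1 / Real.pi) := by
        exact mul_le_mul h1 h2 (abs_nonneg _) hπ.le
    _ = 1 := by field_simp

lemma gfun_intble (a b : ℝ) : IntervalIntegrable gfun volume a b := by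
  constructor <;>
  · apply Measure.integrableOn_of_bounded measure_Ioc_lt_top.ne
      gfun_meas.aestronglyMeasurable (M := 1)
    exact Filter.Eventually.of_forall fun x => by
      simpa [Real.norm_eq_abs] using gfun_abs_le x

lemma gfun_symm (x : ℝ) : gfun (-x) + gfun x = Real.arctan x / x := by
  rcases eq_or_ne x 0 with rfl | hx
  · simp [gfun]
  have hπ := Real.pi_ne_zero
  simp only [gfun, Real.arcsin_neg, Real.arctan_neg, mul_neg, neg_div_neg_eq]
  field_simp
  ring

lemma summable_aux : Summable (fun n : ℕ => (1 : ℝ) / (2 * n + 1) ^ 2) := by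
  have h : Summable (fun n : ℕ => (1 : ℝ) / ((n : ℝ) + 1) ^ 2) := by
    have := (Real.summable_one_div_nat_pow.mpr (le_refl 2))
    rw [← summable_nat_add_iff 1] at this
    simpa using this
  apply h.of_nonneg_of_le (fun n => by positivity)
  intro n
  apply one_div_le_one_div_of_le (by positivity)
  have : ((n : ℝ) + 1) ≤ 2 * n + 1 := by push_cast; linarith [Nat.cast_nonneg (α := ℝ) n]
  exact pow_le_pow_left₀ (by positivity) this 2

lemma integral_arctan_div : ∫ x in (0:ℝ)..1, Real.arctan x / x
    = ∑' n : ℕ, (-1 : ℝ)^n / (2 * n + 1)^2 := by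
  set F : ℕ → ℝ → ℝ := fun n x => (-1 : ℝ)^n * x^(2*n) / (2*n+1) with hF
  have hFc : ∀ n, Continuous (F n) := fun n => by fun_prop
  have hμ : volume (Ioc (0:ℝ) 1) ≠ ⊤ := measure_Ioc_lt_top.ne
  -- integrability of each F n on Ioc 0 1
  have hFint : ∀ n, Integrable (F n) (volume.restrict (Ioc (0:ℝ) 1)) := fun n => by
    apply Measure.integrableOn_of_bounded hμ (hFc n).measurable.aestronglyMeasurable
      (M := 1 / (2*n+1))
    filter_upwards [ae_restrict_mem measurableSet_Ioc] with x hx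
    rw [hF, Real.norm_eq_abs, abs_div, abs_mul, abs_pow, abs_neg, abs_one, one_pow, one_mul,
      abs_of_pos (by positivity : (0:ℝ) < 2*n+1)]
    apply div_le_div_of_nonneg_right ?_ (by positivity)
    · calc |x ^ (2*n)| = |x| ^ (2*n) := abs_pow x _
        _ ≤ 1 := pow_le_one₀ (abs_nonneg x) (abs_le.mpr ⟨by linarith [hx.1], hx.2⟩)
  -- value of each integral
  have hval : ∀ n : ℕ, ∫ x in Ioc (0:ℝ) 1, F n x = (-1:ℝ)^n / (2*n+1)^2 := by
    intro n
    rw [← intervalIntegral.integral_of_le (by norm_num : (0:ℝ) ≤ 1)]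
    simp only [hF, div_eq_mul_inv, mul_assoc]
    rw [intervalIntegral.integral_const_mul]
    rw [intervalIntegral.integral_mul_const, integral_pow]
    push_cast
    field_simp
    ring
  -- norm integrals summable
  have hnorm : ∀ n : ℕ, ∫ x in Ioc (0:ℝ) 1, ‖F n x‖ = 1 / (2*n+1)^2 := by
    intro n
    have : ∀ x ∈ Ioc (0:ℝ) 1, ‖F n x‖ = x^(2*n) / (2*n+1) := by
      intro x hx
      rw [hF, Real.norm_eq_abs, abs_div, abs_mul, abs_pow, abs_neg, abs_one, one_pow, one_mul,
        abs_of_pos (by positivity : (0:ℝ) < 2*n+1), abs_of_pos (pow_pos hx.1 _)]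
    rw [setIntegral_congr_fun measurableSet_Ioc this,
      ← intervalIntegral.integral_of_le (by norm_num : (0:ℝ) ≤ 1)]
    rw [intervalIntegral.integral_div, integral_pow]
    push_cast
    field_simp
    ring
  have hsum : Summable fun n : ℕ => ∫ x in Ioc (0:ℝ) 1, ‖F n x‖ := by
    simp_rw [hnorm]; exact summable_aux
  -- pointwise sum on Ioo
  have hpt : ∀ x ∈ Ioo (0:ℝ) 1, Real.arctan x / x = ∑' n, F n x := by
    intro x hx
    have hx0 : x ≠ 0 := ne_of_gt hx.1
    have hxlt : |x| < 1 := by rw [abs_of_pos hx.1]; exact hx.2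
    have hs := Real.hasSum_arctan (x := x) (by rwa [Real.norm_eq_abs])
    have := (hs.div_const x).tsum_eq
    rw [← this]
    congr 1
    funext n
    rw [hF]
    have : x ^ (2*n+1) = x ^ (2*n) * x := pow_succ x (2*n)
    push_cast
    field_simp [this]
    ring
  rw [intervalIntegral.integral_of_le (by norm_num : (0:ℝ) ≤ 1)]
  calc ∫ x in Ioc (0:ℝ) 1, Real.arctan x / x
      = ∫ x in Ioo (0:ℝ) 1, Real.arctan x / x := integral_Ioc_eq_integral_Ioo
    _ = ∫ x in Ioo (0:ℝ) 1, ∑' n, F n x := setIntegral_congr_fun measurableSet_Ioo hpt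
    _ = ∫ x in Ioc (0:ℝ) 1, ∑' n, F n x := integral_Ioc_eq_integral_Ioo.symm
    _ = ∑' n, ∫ x in Ioc (0:ℝ) 1, F n x :=
        (integral_tsum_of_summable_integral_norm hFint hsum).symm
    _ = ∑' n : ℕ, (-1 : ℝ)^n / (2 * n + 1)^2 := by simp_rw [hval]

theorem catalan_arcsin_weight :
    ∫ x in (-1:ℝ)..1, (Real.pi / 2 + Real.arcsin x) * (Real.arctan x / (Real.pi * x))
      = ∑' n : ℕ, (-1 : ℝ)^n / (2 * n + 1)^2 := by
  have key : ∫ x in (-1:ℝ)..1, gfun x = ∑' n : ℕ, (-1 : ℝ)^n / (2 * n + 1)^2 := by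
    have hsplit : ∫ x in (-1:ℝ)..1, gfun x
        = (∫ x in (-1:ℝ)..0, gfun x) + ∫ x in (0:ℝ)..1, gfun x :=
      (intervalIntegral.integral_add_adjacent_intervals (gfun_intble _ _) (gfun_intble _ _)).symm
    have hneg : ∫ x in (-1:ℝ)..0, gfun x = ∫ x in (0:ℝ)..1, gfun (-x) := by
      rw [intervalIntegral.integral_comp_neg (a := 0) (b := 1) gfun]
      norm_num
    have hnegint : IntervalIntegrable (fun x => gfun (-x)) volume 0 1 := by
      have := ((IntervalIntegrable.iff_comp_neg (f := gfun) (a := -1) (b := 0)).mp (gfun_intble (-1) 0)).symm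
      simpa using this
    rw [hsplit, hneg, ← intervalIntegral.integral_add hnegint (gfun_intble 0 1)]
    simp_rw [gfun_symm]
    exact integral_arctan_div
  exact key
end

section
/- ∫_{[0,1]³} (1 - (x₁x₂x₃)²)/(1 + (x₁x₂x₃)²)² dx₁ dx₂ dx₃ = G, where G is Catalan's constant. -/
open MeasureTheory intervalIntegral Set
open MeasureTheory intervalIntegral Set

-- antiderivative lemma
lemma innerA (a : ℝ) : ∫ x in (0:ℝ)..1, (1 - (a*x)^2) / (1 + (a*x)^2)^2 = 1/(1+a^2) := by
  have hpos : ∀ x : ℝ, (0:ℝ) < 1 + (a*x)^2 := fun x => by positivity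
  have hderiv : ∀ x ∈ Set.uIcc (0:ℝ) 1,
      HasDerivAt (fun y : ℝ => y / (1 + (a*y)^2))
        ((1 - (a*x)^2) / (1 + (a*x)^2)^2) x := by
    intro x _
    have h1 : HasDerivAt (fun y : ℝ => y) 1 x := hasDerivAt_id x
    have h2 : HasDerivAt (fun y : ℝ => 1 + (a*y)^2) (2*(a*x)*a) x := by
      have := ((hasDerivAt_id x).const_mul a).pow 2
      simpa using (this.const_add 1)
    have := h1.div h2 (hpos x).ne'
    refine this.congr_deriv ?_
    ring
  have hcont : IntervalIntegrable (fun x => (1 - (a*x)^2) / (1 + (a*x)^2)^2)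
      volume 0 1 := by
    apply Continuous.intervalIntegrable
    exact (continuous_const.sub ((continuous_const.mul continuous_id).pow 2)).div
      (((continuous_const.add ((continuous_const.mul continuous_id).pow 2)).pow 2))
      (fun x => by positivity)
  rw [integral_eq_sub_of_hasDerivAt hderiv hcont]
  norm_num

lemma geomSum {u : ℝ} (hu : |u| < 1) :
    HasSum (fun n : ℕ => (-1:ℝ)^n * u^(2*n)) (1/(1+u^2)) := by
  have h : ‖-u^2‖ < 1 := by
    rw [norm_neg, norm_pow]
    exact pow_lt_one₀ (abs_nonneg u) hu two_ne_zero |>.trans_le le_rfl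
  have := hasSum_geometric_of_norm_lt_one h
  have heq : (fun n : ℕ => (-u^2)^n) = fun n : ℕ => (-1:ℝ)^n * u^(2*n) := by
    funext n
    rw [neg_pow, pow_mul]
  rw [heq] at this
  rw [sub_neg_eq_add, ← one_div] at this
  exact this

lemma normF (c x : ℝ) (n : ℕ) : ‖(-1:ℝ)^n * (c*x)^(2*n)‖ = (c*x)^(2*n) := by
  rw [norm_mul, norm_pow, norm_neg, norm_one, one_pow, one_mul, Real.norm_eq_abs,
    abs_pow, (even_two_mul n).pow_abs]

lemma intPow (c : ℝ) (n : ℕ) :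
    ∫ x in Ioc (0:ℝ) 1, (c*x)^(2*n) = c^(2*n) / (2*n+1) := by
  rw [← intervalIntegral.integral_of_le zero_le_one]
  have : ∀ x : ℝ, (c*x)^(2*n) = c^(2*n) * x^(2*n) := fun x => mul_pow c x (2*n)
  simp_rw [this, intervalIntegral.integral_const_mul, integral_pow]
  push_cast
  ring

set_option maxHeartbeats 1000000 in
lemma swapB {b : ℝ} (hb0 : 0 ≤ b) (hb1 : b < 1) :
    ∫ x in (0:ℝ)..1, 1/(1+(b*x)^2) = ∑' n : ℕ, (-1:ℝ)^n * b^(2*n) / (2*n+1) := by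
  rw [intervalIntegral.integral_of_le zero_le_one]
  have hpt : EqOn (fun x : ℝ => 1/(1+(b*x)^2))
      (fun x : ℝ => ∑' n : ℕ, (-1:ℝ)^n * (b*x)^(2*n)) (Ioc 0 1) := by
    intro x hx
    have habs : |b*x| < 1 := by
      rw [abs_mul]
      calc |b| * |x| ≤ b * 1 := by
            apply mul_le_mul (le_of_eq (abs_of_nonneg hb0)) _ (abs_nonneg x) hb0
            rw [abs_of_nonneg hx.1.le]; exact hx.2
        _ < 1 := by simpa using hb1
    exact ((geomSum habs).tsum_eq).symm
  rw [setIntegral_congr_fun measurableSet_Ioc hpt]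
  have hint : ∀ n : ℕ, IntegrableOn (fun x : ℝ => (-1:ℝ)^n * (b*x)^(2*n)) (Ioc 0 1) volume := by
    intro n
    exact (continuous_const.mul ((continuous_const.mul continuous_id).pow _)).integrableOn_Ioc
  have hnorm : ∀ n : ℕ, ∫ x in Ioc (0:ℝ) 1, ‖(-1:ℝ)^n * (b*x)^(2*n)‖ = b^(2*n) / (2*n+1) := by
    intro n
    rw [show (fun x : ℝ => ‖(-1:ℝ)^n * (b*x)^(2*n)‖) = fun x : ℝ => (b*x)^(2*n)
      from funext fun x => normF b x n]
    exact intPow b n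
  have hs2 : Summable (fun n : ℕ => b^(2*n) / (2*(n:ℝ)+1)) := by
    have hg : Summable (fun n : ℕ => (b^2)^n) :=
      summable_geometric_of_lt_one (by positivity) (by nlinarith)
    refine Summable.of_nonneg_of_le (fun n => by positivity) (fun n => ?_) hg
    rw [pow_mul]
    calc (b^2)^n / (2*(n:ℝ)+1) ≤ (b^2)^n / 1 := by
          apply div_le_div_of_nonneg_left (by positivity) one_pos
          · linarith [Nat.cast_nonneg (α := ℝ) n]
      _ = (b^2)^n := div_one _
  have hsum : Summable fun n : ℕ => ∫ x in Ioc (0:ℝ) 1, ‖(-1:ℝ)^n * (b*x)^(2*n)‖ := by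
    rw [funext hnorm]; exact hs2
  rw [← MeasureTheory.integral_tsum_of_summable_integral_norm hint hsum]
  apply tsum_congr
  intro n
  rw [show (fun x : ℝ => (-1:ℝ)^n * (b*x)^(2*n)) = fun x : ℝ => (-1:ℝ)^n * (b*x)^(2*n) from rfl]
  calc ∫ x in Ioc (0:ℝ) 1, (-1:ℝ)^n * (b*x)^(2*n)
      = (-1:ℝ)^n * ∫ x in Ioc (0:ℝ) 1, (b*x)^(2*n) := by
        exact MeasureTheory.integral_const_mul _ _
    _ = (-1:ℝ)^n * (b^(2*n) / (2*n+1)) := by rw [intPow]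
    _ = (-1:ℝ)^n * b^(2*n) / (2*n+1) := by ring

lemma normG (x : ℝ) (n : ℕ) :
    ‖(-1:ℝ)^n * x^(2*n) / (2*n+1)‖ = x^(2*n) / (2*n+1) := by
  rw [norm_div, norm_mul, norm_pow, norm_neg, norm_one, one_pow, one_mul,
    Real.norm_eq_abs, Real.norm_eq_abs, abs_pow, (even_two_mul n).pow_abs,
    abs_of_pos (by positivity : (0:ℝ) < 2*(n:ℝ)+1)]

lemma intPow2 (n : ℕ) :
    ∫ x in Ioc (0:ℝ) 1, x^(2*n) / (2*(n:ℝ)+1) = 1 / (2*(n:ℝ)+1)^2 := by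
  have : ∀ x : ℝ, x^(2*n) / (2*(n:ℝ)+1) = (1/(2*(n:ℝ)+1)) * x^(2*n) := fun x => by ring
  rw [funext this, MeasureTheory.integral_const_mul,
    ← intervalIntegral.integral_of_le zero_le_one, integral_pow]
  push_cast
  have h : (2*(n:ℝ)+1) ≠ 0 := by positivity
  field_simp
  ring

set_option maxHeartbeats 1000000 in
lemma swapC :
    ∫ x in Ioc (0:ℝ) 1, ∑' n : ℕ, (-1:ℝ)^n * x^(2*n) / (2*n+1)
      = ∑' n : ℕ, (-1:ℝ)^n / (2*n+1)^2 := by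
  have hint : ∀ n : ℕ, IntegrableOn (fun x : ℝ => (-1:ℝ)^n * x^(2*n) / (2*n+1))
      (Ioc 0 1) volume := by
    intro n
    exact ((continuous_const.mul (continuous_pow _)).div_const _).integrableOn_Ioc
  have hnorm : ∀ n : ℕ, ∫ x in Ioc (0:ℝ) 1, ‖(-1:ℝ)^n * x^(2*n) / (2*n+1)‖
      = 1 / (2*(n:ℝ)+1)^2 := by
    intro n
    rw [show (fun x : ℝ => ‖(-1:ℝ)^n * x^(2*n) / (2*n+1)‖)
        = fun x : ℝ => x^(2*n) / (2*(n:ℝ)+1) from funext fun x => normG x n]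
    exact intPow2 n
  have hs2 : Summable (fun n : ℕ => (1:ℝ) / (2*(n:ℝ)+1)^2) := by
    have hg : Summable (fun n : ℕ => (1:ℝ)/((n:ℝ)+1)^2) := by
      have := Real.summable_one_div_nat_pow.mpr (one_lt_two (α := ℕ))
      exact_mod_cast (summable_nat_add_iff 1).mpr this
    refine Summable.of_nonneg_of_le (fun n => by positivity) (fun n => ?_) hg
    apply div_le_div_of_nonneg_left one_pos.le (by positivity)
    · nlinarith [Nat.cast_nonneg (α := ℝ) n]
  have hsum : Summable fun n : ℕ => ∫ x in Ioc (0:ℝ) 1, ‖(-1:ℝ)^n * x^(2*n) / (2*n+1)‖ := by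
    rw [funext hnorm]; exact hs2
  rw [← MeasureTheory.integral_tsum_of_summable_integral_norm hint hsum]
  apply tsum_congr
  intro n
  have : ∀ x : ℝ, (-1:ℝ)^n * x^(2*n) / (2*n+1) = (-1:ℝ)^n * (x^(2*n) / (2*(n:ℝ)+1)) :=
    fun x => by ring
  rw [funext this, MeasureTheory.integral_const_mul, intPow2]
  ring

theorem catalan_triple_integral :
    ∫ x₁ in (0:ℝ)..1, ∫ x₂ in (0:ℝ)..1, ∫ x₃ in (0:ℝ)..1,
        (1 - (x₁ * x₂ * x₃)^2) / (1 + (x₁ * x₂ * x₃)^2)^2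
      = ∑' n : ℕ, (-1 : ℝ)^n / (2 * n + 1)^2 := by
  have h1 : ∀ x₁ x₂ : ℝ, (∫ x₃ in (0:ℝ)..1,
      (1 - (x₁ * x₂ * x₃)^2) / (1 + (x₁ * x₂ * x₃)^2)^2) = 1/(1+(x₁*x₂)^2) := by
    intro x₁ x₂
    exact innerA (x₁ * x₂)
  simp only [h1]
  rw [intervalIntegral.integral_of_le zero_le_one]
  have hne : ∀ᵐ x : ℝ, x ≠ 1 := by
    refine ae_iff.mpr ?_
    simp only [not_not, Set.setOf_eq_eq_singleton]
    exact Real.volume_singleton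
  rw [setIntegral_congr_ae measurableSet_Ioc (g := fun x : ℝ =>
      ∑' n : ℕ, (-1:ℝ)^n * x^(2*n) / (2*n+1)) ?_]
  · exact swapC
  · filter_upwards [hne] with x hx1 hx
    exact swapB hx.1.le (lt_of_le_of_ne hx.2 hx1)
end

section
/- ∫_{[0,1]⁴} (1 - 6u + u²)/(1 + u)³ dx₁ dx₂ dx₃ dx₄ = G, where u = (x₁x₂x₃x₄)² and G is Catalan's constant. -/
open MeasureTheory Set

lemma cat_L1 (a : ℝ) :
    ∫ x in (0:ℝ)..1, (1 - 6 * (a * x)^2 + ((a * x)^2)^2) / (1 + (a * x)^2)^3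
      = (1 - a^2) / (1 + a^2)^2 := by
  have hne : ∀ x : ℝ, (1 + a^2 * x^2) ≠ 0 := fun x => by positivity
  have key : ∀ x ∈ Set.uIcc (0:ℝ) 1,
      HasDerivAt (fun x : ℝ => (x - a^2 * x^3) / (1 + a^2 * x^2)^2)
        ((1 - 6 * (a * x)^2 + ((a * x)^2)^2) / (1 + (a * x)^2)^3) x := by
    intro x _
    have hN : HasDerivAt (fun x : ℝ => x - a^2 * x^3) (1 - a^2 * (3 * x^2)) x := by
      exact ((hasDerivAt_id' (x := x)).sub ((hasDerivAt_pow 3 x).const_mul (a^2))).congr_deriv (by norm_num)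
    have hD : HasDerivAt (fun x : ℝ => (1 + a^2 * x^2)^2)
        (2 * (1 + a^2 * x^2)^1 * (a^2 * (2 * x^1))) x := by
      exact ((((hasDerivAt_pow 2 x).const_mul (a^2)).const_add 1).pow 2)
    have h := hN.div hD (pow_ne_zero 2 (hne x))
    convert h using 1
    have h2 : (1 + (a*x)^2) ≠ 0 := by positivity
    · rfl
    · rfl
    · rfl
    rw [div_eq_div_iff (by positivity) (by positivity)]
    ring
  rw [intervalIntegral.integral_eq_sub_of_hasDerivAt key ?_]
  · norm_num
  · apply Continuous.intervalIntegrable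
    exact Continuous.div (by continuity) (by continuity) (fun x => by positivity)

lemma cat_L2 (b : ℝ) :
    ∫ x in (0:ℝ)..1, (1 - (b * x)^2) / (1 + (b * x)^2)^2 = 1 / (1 + b^2) := by
  have hne : ∀ x : ℝ, (1 + b^2 * x^2) ≠ 0 := fun x => by positivity
  have key : ∀ x ∈ Set.uIcc (0:ℝ) 1,
      HasDerivAt (fun x : ℝ => x / (1 + b^2 * x^2))
        ((1 - (b * x)^2) / (1 + (b * x)^2)^2) x := by
    intro x _
    have hN : HasDerivAt (fun x : ℝ => x) (1:ℝ) x := hasDerivAt_id' x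
    have hD : HasDerivAt (fun x : ℝ => 1 + b^2 * x^2) (b^2 * (2 * x^1)) x := by
      exact (((hasDerivAt_pow 2 x).const_mul (b^2)).const_add 1)
    have h := hN.div hD (hne x)
    convert h using 1
    have h2 : (1 + (b*x)^2) ≠ 0 := by positivity
    · rfl
    · rfl
    · rfl
    rw [div_eq_div_iff (by positivity) (by positivity)]
    ring
  rw [intervalIntegral.integral_eq_sub_of_hasDerivAt key ?_]
  · norm_num
  · apply Continuous.intervalIntegrable
    exact Continuous.div (by continuity) (by continuity) (fun x => by positivity)

lemma cat_sum_sq : Summable (fun n : ℕ => (1:ℝ) / (2 * n + 1)^2) := by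
  have h1 : Summable (fun n : ℕ => (1:ℝ) / (n + 1)^2) := by
    have := (Real.summable_one_div_nat_pow (p := 2)).mpr (by norm_num)
    have h2 := (summable_nat_add_iff 1).mpr this
    refine h2.congr fun n => ?_
    push_cast
    ring
  refine Summable.of_nonneg_of_le (fun n => by positivity) (fun n => ?_) h1
  have h2 : ((n:ℝ)+1)^2 ≤ (2*n+1)^2 := by nlinarith [Nat.cast_nonneg (α := ℝ) n]
  exact one_div_le_one_div_of_le (by positivity) h2

lemma cat_mono_int (n : ℕ) :
    ∫ y in Set.Ioc (0:ℝ) 1, y ^ (2 * n) = 1 / (2 * n + 1) := by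
  rw [← intervalIntegral.integral_of_le zero_le_one, integral_pow]
  push_cast
  norm_num

lemma cat_inner (x : ℝ) (hx : x ∈ Set.Ioo (0:ℝ) 1) :
    ∫ y in (0:ℝ)..1, 1 / (1 + (x * y)^2)
      = ∑' n : ℕ, (-1:ℝ)^n * x^(2*n) / (2*n+1) := by
  obtain ⟨hx0, hx1⟩ := hx
  have habs : ∀ y ∈ Set.Ioc (0:ℝ) 1, |(-(x*y)^2)| < 1 := by
    intro y hy
    rw [abs_neg, abs_of_nonneg (sq_nonneg _)]
    have hxy0 : 0 < x * y := mul_pos hx0 hy.1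
    have hxy1 : x * y < 1 := by nlinarith [hy.1, hy.2]
    nlinarith
  have hpoint : ∀ n : ℕ, ∀ y : ℝ, (-(x*y)^2)^n = (-1:ℝ)^n * x^(2*n) * y^(2*n) := by
    intro n y
    rw [neg_pow, mul_pow, mul_pow, ← pow_mul, ← pow_mul]
    ring
  rw [intervalIntegral.integral_of_le zero_le_one]
  have hcong : Set.EqOn (fun y => 1 / (1 + (x*y)^2))
      (fun y => ∑' n : ℕ, (-(x*y)^2)^n) (Set.Ioc (0:ℝ) 1) := by
    intro y hy
    show 1 / (1 + (x*y)^2) = ∑' n : ℕ, (-(x*y)^2)^n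
    rw [tsum_geometric_of_norm_lt_one (by rw [Real.norm_eq_abs]; exact habs y hy),
      sub_neg_eq_add, one_div]
  rw [setIntegral_congr_fun measurableSet_Ioc hcong]
  have hint : ∀ n : ℕ, IntegrableOn (fun y : ℝ => (-(x*y)^2)^n) (Set.Ioc (0:ℝ) 1) := by
    intro n
    exact (Continuous.integrableOn_Ioc (by continuity))
  have hnorm : ∀ n : ℕ, ∫ y in Set.Ioc (0:ℝ) 1, ‖(-(x*y)^2)^n‖ = x^(2*n) / (2*n+1) := by
    intro n
    have : Set.EqOn (fun y : ℝ => ‖(-(x*y)^2)^n‖) (fun y => x^(2*n) * y^(2*n))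
        (Set.Ioc (0:ℝ) 1) := by
      intro y hy
      show ‖(-(x*y)^2)^n‖ = x^(2*n) * y^(2*n)
      rw [Real.norm_eq_abs, abs_pow, abs_neg, abs_of_nonneg (sq_nonneg (x*y)),
        mul_pow, mul_pow, ← pow_mul, ← pow_mul]
    rw [setIntegral_congr_fun measurableSet_Ioc this, MeasureTheory.integral_const_mul, cat_mono_int]
    ring
  have hsum : Summable (fun n : ℕ => ∫ y in Set.Ioc (0:ℝ) 1, ‖(-(x*y)^2)^n‖) := by
    simp only [hnorm]
    refine Summable.of_nonneg_of_le (fun n => by positivity) (fun n => ?_)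
      (summable_geometric_of_lt_one (by positivity) (by nlinarith) : Summable fun n : ℕ => (x^2)^n)
    rw [← pow_mul, mul_comm 2 n]
    rw [div_le_iff₀ (by positivity)]
    nlinarith [pow_nonneg (le_of_lt hx0) (n * 2)]
  rw [← MeasureTheory.integral_tsum_of_summable_integral_norm hint hsum]
  refine tsum_congr fun n => ?_
  simp only [hpoint n]
  rw [MeasureTheory.integral_const_mul, cat_mono_int]
  ring

lemma cat_L3 :
    ∫ x in (0:ℝ)..1, ∫ y in (0:ℝ)..1, 1 / (1 + (x * y)^2)
      = ∑' n : ℕ, (-1:ℝ)^n / (2 * n + 1)^2 := by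
  rw [intervalIntegral.integral_of_le zero_le_one, integral_Ioc_eq_integral_Ioo,
    setIntegral_congr_fun measurableSet_Ioo (fun x hx => cat_inner x hx)]
  have hint : ∀ n : ℕ, IntegrableOn (fun x : ℝ => (-1:ℝ)^n * x^(2*n) / (2*n+1))
      (Set.Ioo (0:ℝ) 1) := by
    intro n
    exact ((Continuous.integrableOn_Ioc (by continuity)).mono_set Set.Ioo_subset_Ioc_self)
  have hval : ∀ n : ℕ, ∫ x in Set.Ioo (0:ℝ) 1, (-1:ℝ)^n * x^(2*n) / (2*n+1)
      = (-1:ℝ)^n / (2*n+1)^2 := by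
    intro n
    rw [← integral_Ioc_eq_integral_Ioo]
    simp only [mul_div_assoc]
    rw [MeasureTheory.integral_const_mul]
    have : ∫ x in Set.Ioc (0:ℝ) 1, x^(2*n) / (2*(n:ℝ)+1)
        = (1/(2*n+1)) * ∫ x in Set.Ioc (0:ℝ) 1, x^(2*n) := by
      rw [← MeasureTheory.integral_const_mul]
      congr 1; ext x; ring
    rw [this, cat_mono_int]
    have hne : (2*(n:ℝ)+1) ≠ 0 := by positivity
    field_simp
  have hnorm : ∀ n : ℕ, ∫ x in Set.Ioo (0:ℝ) 1, ‖(-1:ℝ)^n * x^(2*n) / (2*n+1)‖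
      = 1 / (2*n+1)^2 := by
    intro n
    have : Set.EqOn (fun x : ℝ => ‖(-1:ℝ)^n * x^(2*n) / (2*n+1)‖)
        (fun x => x^(2*n) / (2*(n:ℝ)+1)) (Set.Ioo (0:ℝ) 1) := by
      intro x hx
      simp only [Real.norm_eq_abs, abs_div, abs_mul, abs_pow, abs_neg, abs_one, one_pow,
        abs_of_nonneg (le_of_lt hx.1), abs_of_nonneg (by positivity : (0:ℝ) ≤ 2*(n:ℝ)+1)]
      ring
    rw [setIntegral_congr_fun measurableSet_Ioo this, ← integral_Ioc_eq_integral_Ioo]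
    have : ∫ x in Set.Ioc (0:ℝ) 1, x^(2*n) / (2*(n:ℝ)+1)
        = (1/(2*n+1)) * ∫ x in Set.Ioc (0:ℝ) 1, x^(2*n) := by
      rw [← MeasureTheory.integral_const_mul]
      congr 1; ext x; ring
    rw [this, cat_mono_int]
    have hne : (2*(n:ℝ)+1) ≠ 0 := by positivity
    field_simp
  have hsum : Summable (fun n : ℕ =>
      ∫ x in Set.Ioo (0:ℝ) 1, ‖(-1:ℝ)^n * x^(2*n) / (2*n+1)‖) := by
    simp only [hnorm]
    exact cat_sum_sq
  rw [← MeasureTheory.integral_tsum_of_summable_integral_norm hint hsum]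
  exact tsum_congr fun n => hval n

theorem catalan_quadruple_integral :
    ∫ x₁ in (0:ℝ)..1, ∫ x₂ in (0:ℝ)..1, ∫ x₃ in (0:ℝ)..1, ∫ x₄ in (0:ℝ)..1,
        (1 - 6 * (x₁ * x₂ * x₃ * x₄)^2 + ((x₁ * x₂ * x₃ * x₄)^2)^2) /
          (1 + (x₁ * x₂ * x₃ * x₄)^2)^3
      = ∑' n : ℕ, (-1 : ℝ)^n / (2 * n + 1)^2 := by
  simp only [cat_L1, cat_L2]
  exact cat_L3
end
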